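/- arXiv:1106.0051 — 2 statements merged into one kernel-verified Lean document; each statement's English description precedes it below -/
import Mathlib

section
/- (Expanding return words.) Assume (F0), (F1) and (F01). Then there exists b₀∈(0,1) such that for every b∈(0,b₀] and every nondegenerate closed interval J ⊆ [f₀⁻¹(f₀⁻¹(b)), b] there exist a finite word w over {0,1} and a point q*∈J such that: f_[w](q*) = q*; (f_[w])'(q*) > 1; q* is the unique fixed point of f_[w] in J; and for every ε>0 one has ⋃_{n≥0} (f_[w])ⁿ([q*−ε, q*+ε] ∩ [0,1]) ⊇ [f₀⁻¹(f₀⁻¹(b)), b]. -/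
open Set Filter MeasureTheory

noncomputable section

/-- Condition (F0) on the fiber map `f₀`. -/
def F0cond (f₀ : ℝ → ℝ) (β₀ lam₀ : ℝ) : Prop :=
  ContDiff ℝ 1 f₀ ∧ Set.MapsTo f₀ (Set.Icc 0 1) (Set.Icc 0 1) ∧
  StrictMonoOn f₀ (Set.Icc 0 1) ∧ f₀ 0 = 0 ∧ f₀ 1 = 1 ∧
  (∀ x ∈ Set.Ioo (0:ℝ) 1, x < f₀ x) ∧
  deriv f₀ 0 = β₀ ∧ 1 < β₀ ∧ deriv f₀ 1 = lam₀ ∧ 0 < lam₀ ∧ lam₀ < 1 ∧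
  (∀ x ∈ Set.Icc (0:ℝ) 1, lam₀ ≤ deriv f₀ x)

/-- Condition (F1) on the fiber map `f₁`. -/
def F1cond (f₁ : ℝ → ℝ) (γ lam₀ : ℝ) : Prop :=
  (∀ x, f₁ x = γ * (1 - x)) ∧ lam₀ ≤ γ ∧ γ < 1

/-- Condition (F2) on the fiber map `f₂`. -/
def F2cond (f₂ : ℝ → ℝ) (β₂ lam₀ : ℝ) : Prop :=
  ContDiff ℝ 1 f₂ ∧ Set.MapsTo f₂ (Set.Icc 0 1) (Set.Icc 0 1) ∧
  StrictMonoOn f₂ (Set.Icc 0 1) ∧ f₂ 0 = 0 ∧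
  deriv f₂ 0 = β₂ ∧ 1 < β₂ ∧ (∀ x ∈ Set.Icc (0:ℝ) 1, lam₀ ≤ deriv f₂ x) ∧
  ∃ p₂, p₂ ∈ Set.Ioo (0:ℝ) 1 ∧ f₂ p₂ = p₂ ∧ (∀ x ∈ Set.Ioo 0 p₂, x < f₂ x) ∧
    (∀ x ∈ Set.Ioc p₂ 1, f₂ x < x)

/-- Condition (F01). -/
def F01cond (f₀ : ℝ → ℝ) (β₀ lam₀ γ : ℝ) : Prop :=
  AntitoneOn (deriv f₀) (Set.Icc 0 1) ∧
  1 < γ * (lam₀ ^ 3 * (1 - lam₀) / (1 - β₀⁻¹))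

/-- Condition (F012), with `H = [0,δ]`, `H' = [1-γ⁻¹δ,1]`, and the derived constants
`β' = βpr`, `β_H = βH`, `λ' = lampr`, `L`. -/
def F012cond (f₀ f₁ f₂ : ℝ → ℝ) (γ lam₀ β₀ β₂ δ βpr βH lampr : ℝ) (L : ℕ) : Prop :=
  (∀ x ∈ Set.Icc (0:ℝ) 1, deriv f₀ x ≤ max β₀ β₂ ∧ deriv f₂ x ≤ max β₀ β₂) ∧
  0 < δ ∧ δ < γ ∧
  (f₁ '' Set.Icc 0 δ) ∩ Set.Icc 0 δ = ∅ ∧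
  (f₁ '' Set.Icc (1 - γ⁻¹ * δ) 1) ∩ Set.Icc (1 - γ⁻¹ * δ) 1 = ∅ ∧
  (f₁ '' Set.Icc 0 1) ∩ Set.Icc (1 - γ⁻¹ * δ) 1 = ∅ ∧
  (f₂ '' Set.Icc 0 1) ∩ Set.Icc (1 - γ⁻¹ * δ) 1 = ∅ ∧
  IsGreatest {y | ∃ x ∈ Set.Icc δ 1, y = max (deriv f₀ x) (deriv f₂ x)} βpr ∧
  1 < βpr ∧ βpr < min β₀ β₂ ∧
  IsLeast {y | ∃ x ∈ Set.Icc (0:ℝ) δ, y = min (deriv f₀ x) (deriv f₂ x)} βH ∧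
  1 < βH ∧ βH < min β₀ β₂ ∧
  IsGreatest {y | ∃ x ∈ Set.Icc (1 - γ⁻¹ * δ) 1, y = deriv f₀ x} lampr ∧
  lampr < 1 ∧
  |Real.log lam₀| * Real.log (max β₀ β₂) / Real.log βH - |Real.log lampr|
      + (2 / 3) * Real.log (max β₀ β₂) < (3 / 4) * Real.log βpr ∧
  1 ≤ L ∧
  4 * |Real.log lam₀| * Real.log (max β₀ β₂) / (Real.log βH * Real.log βpr) < (L : ℝ) ∧
  Real.log ((max β₀ β₂) ^ L * γ) / ((L : ℝ) + 1) < Real.log βpr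

/-- `f_{ξ_{n-1}} ∘ ⋯ ∘ f_{ξ₀}`. -/
def seqComp (fs : Fin 3 → ℝ → ℝ) (ξ : ℕ → Fin 3) : ℕ → ℝ → ℝ
  | 0 => id
  | n + 1 => fun x => fs (ξ n) (seqComp fs ξ n x)

/-- The upper Lyapunov exponent of the point `p` under the itinerary `ξ`. -/
def lyapUpper (fs : Fin 3 → ℝ → ℝ) (p : ℝ) (ξ : ℕ → Fin 3) : ℝ :=
  Filter.limsup (fun n : ℕ => (1 / (n : ℝ)) * Real.log |deriv (seqComp fs ξ n) p|) Filter.atTop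

/-- Membership in the exceptional set `E`. -/
def exceptional (fs : Fin 3 → ℝ → ℝ) (p : ℝ) (ξ : ℕ → Fin 3) : Prop :=
  ∃ m : ℕ, seqComp fs ξ m p = 0 ∧ ∀ j, m ≤ j → (ξ j = 0 ∨ ξ j = 2)

/-- `f_[w] = f_{w_{m-1}} ∘ ⋯ ∘ f_{w₀}` for a finite word `w`. -/
def wordComp {α : Type*} (fs : α → ℝ → ℝ) (w : List α) : ℝ → ℝ :=
  fun x => w.foldl (fun y i => fs i y) x

/-- The two-sided sequence space `Σ₃`. -/
abbrev Sig3 := ℤ → Fin 3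

/-- The state space `Σ₃ × [0,1]`. -/
abbrev XSp := Sig3 × (Set.Icc (0:ℝ) 1)

instance : UniformSpace (Fin 3) := ⊥

/-- The left shift on `Σ₃`. -/
def shiftMap (ξ : Sig3) : Sig3 := fun i => ξ (i + 1)

/-- The step skew product `G(ξ,x) = (σξ, f_{ξ₀}(x))` on `Σ₃ × [0,1]`. -/
def Gmap (fs : Fin 3 → ℝ → ℝ) : XSp → XSp :=
  fun p => (shiftMap p.1, Set.projIcc 0 1 (by norm_num) (fs (p.1 0) (p.2 : ℝ)))

/-- The maximal invariant set `Λ_G = ⋂ₙ Gⁿ(Σ₃ × [0,1])`. -/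
def LamG (fs : Fin 3 → ℝ → ℝ) : Set XSp := ⋂ n : ℕ, (Gmap fs)^[n] '' Set.univ

/-- The lateral horseshoe `Λ₀₂`. -/
def Lam02 : Set XSp := {p | (∀ i, p.1 i ≠ 1) ∧ (p.2 : ℝ) = 0}

/-- The central derivative potential `φ(ξ,x) = log|f_{ξ₀}'(x)|`. -/
def phiC (fs : Fin 3 → ℝ → ℝ) (p : XSp) : ℝ := Real.log |deriv (fs (p.1 0)) (p.2 : ℝ)|

/-- The central Lyapunov exponent `χ(μ) = ∫ φ dμ` of a measure. -/
def chiOf (fs : Fin 3 → ℝ → ℝ) (μ : Measure XSp) : ℝ := ∫ p, phiC fs p ∂μ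

/-- `ν` is the `(p 0, p 1, p 2)`-Bernoulli measure on `Σ₃`. -/
def IsBernoulli (p : Fin 3 → ℝ) (ν : Measure Sig3) : Prop :=
  IsProbabilityMeasure ν ∧ ∀ (s : Finset ℤ) (a : ℤ → Fin 3),
    ν {ξ | ∀ i ∈ s, ξ i = a i} = ENNReal.ofReal (∏ i ∈ s, p (a i))


-- MVT chord bounds
lemma slope_bounds' {f : ℝ → ℝ} (hf : ∀ x, HasDerivAt f (deriv f x) x)
    (anti : AntitoneOn (deriv f) (Icc 0 1)) {x y : ℝ} (hx : 0 ≤ x) (hxy : x < y) (hy : y ≤ 1) :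
    deriv f y * (y - x) ≤ f y - f x ∧ f y - f x ≤ deriv f x * (y - x) := by
  obtain ⟨c, hc, hc2⟩ := exists_hasDerivAt_eq_slope f (deriv f) hxy
    (fun z hz => (hf z).continuousAt.continuousWithinAt) (fun z hz => hf z)
  have hcmem : c ∈ Icc (0:ℝ) 1 := ⟨le_of_lt (lt_of_le_of_lt hx hc.1), le_trans hc.2.le hy⟩
  have h1 : deriv f c ≤ deriv f x := anti ⟨hx, le_trans hxy.le hy⟩ hcmem hc.1.le
  have h2 : deriv f y ≤ deriv f c := anti hcmem ⟨le_trans hx hxy.le, hy⟩ hc.2.le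
  have hne : y - x ≠ 0 := sub_ne_zero.mpr hxy.ne'
  rw [eq_div_iff hne] at hc2
  have hslope : f y - f x = deriv f c * (y - x) := hc2.symm
  constructor
  · rw [hslope]; exact mul_le_mul_of_nonneg_right h2 (by linarith)
  · rw [hslope]; exact mul_le_mul_of_nonneg_right h1 (by linarith)

-- polynomial inequality
set_option maxHeartbeats 1000000 in
lemma key_poly {lam γ β : ℝ} (h0 : 0 < lam) (h1 : lam < 1) (h2 : lam ≤ γ) (h3 : γ < 1)
    (hβ : 1 < β) (hc : 1 - β⁻¹ < γ * (lam ^ 3 * (1 - lam))) :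
    (β - 1) ^ 2 * β ^ 3 < (1 - lam) ^ 2 := by
  have hβ0 : (0:ℝ) < β := by linarith
  set u : ℝ := γ * lam ^ 3 with hu
  have hγ0 : 0 < γ := lt_of_lt_of_le h0 h2
  have hu0 : 0 < u := by positivity
  have hul : u < lam ^ 3 := by
    have : lam ^ 3 > 0 := by positivity
    nlinarith
  have hβ1 : β - 1 < β * (u * (1 - lam)) := by
    have : 1 - β⁻¹ = (β - 1) / β := by field_simp
    rw [this] at hc
    have := (div_lt_iff₀ hβ0).mp hc
    nlinarith
  -- β < 1/(1 - u(1-lam))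
  have hw : u * (1 - lam) < lam^3 * (1-lam) := by nlinarith
  have hl3 : lam^3 * (1-lam) < 1 := by nlinarith [pow_lt_one₀ h0.le h1 (three_ne_zero)]
  have hden : 0 < 1 - u * (1 - lam) := by nlinarith
  have hβlt : β < (1 - u * (1 - lam))⁻¹ := by
    rw [inv_eq_one_div, lt_div_iff₀ hden]
    nlinarith
  -- key: u^2 ≤ (1 - u (1-lam))^5, via Bernoulli and AM-GM
  have bern : ∀ w : ℝ, 0 ≤ w → w ≤ 1 → 1 - 5*w ≤ (1-w)^5 := by
    intro w hw0 hw1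
    have e : (1-w)^5 - (1-5*w) = w^2*(10 - 10*w + 5*w^2 - w^3) := by ring
    have p : 0 ≤ 10 - 10*w + 5*w^2 - w^3 := by nlinarith [sq_nonneg w, mul_nonneg hw0 (sq_nonneg w)]
    nlinarith [mul_nonneg (sq_nonneg w) p]
  have amgm : lam^6 + 5*(lam^3*(1-lam)) < 1 := by
    have e1 : lam + lam^5 - 2*lam^3 ≥ 0 := by nlinarith [mul_nonneg h0.le (sq_nonneg (1 - lam^2))]
    have e2 : lam^2 + lam^4 - 2*lam^3 ≥ 0 := by nlinarith [mul_nonneg (sq_nonneg lam) (sq_nonneg (1 - lam))]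
    have pos : 0 < 1+lam+lam^2-4*lam^3+lam^4+lam^5 := by nlinarith
    have factor : 1 - lam^6 - 5*(lam^3*(1-lam)) = (1-lam)*(1+lam+lam^2-4*lam^3+lam^4+lam^5) := by ring
    nlinarith [mul_pos (by linarith : (0:ℝ) < 1-lam) pos]
  have hkey : u^2 < (1 - u*(1-lam))^5 := by
    have h5 : 1 - 5*(u*(1-lam)) ≤ (1 - u*(1-lam))^5 :=
      bern _ (by nlinarith) (by nlinarith)
    have h6 : u^2 + 5*(u*(1-lam)) < lam^6 + 5*(lam^3*(1-lam)) := by nlinarith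
    linarith
  -- conclude
  have hβ5 : β^5 * u^2 < 1 := by
    have h1' : β^5 < ((1 - u*(1-lam))⁻¹)^5 := by
      apply pow_lt_pow_left₀ hβlt hβ0.le <;> norm_num
    have h2' : ((1 - u*(1-lam))⁻¹)^5 * u^2 < 1 := by
      rw [inv_pow]
      rw [inv_mul_lt_iff₀ (by positivity)]
      simpa using hkey
    calc β^5 * u^2 < ((1 - u*(1-lam))⁻¹)^5 * u^2 :=
          mul_lt_mul_of_pos_right h1' (by positivity)
      _ < 1 := h2'
  -- (β-1)^2 β^3 < β^2 u^2 (1-lam)^2 β^3 = β^5 u^2 (1-lam)^2 < (1-lam)^2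
  have hsq : (β-1)^2 < (β * (u*(1-lam)))^2 :=
    pow_lt_pow_left₀ hβ1 (by linarith) (by norm_num)
  have s1 : (β-1)^2*β^3 < (β*(u*(1-lam)))^2*β^3 :=
    mul_lt_mul_of_pos_right hsq (pow_pos hβ0 3)
  have s2 : (β*(u*(1-lam)))^2*β^3 = (β^5*u^2)*(1-lam)^2 := by ring
  have s3 : (β^5*u^2)*(1-lam)^2 < 1*(1-lam)^2 :=
    mul_lt_mul_of_pos_right hβ5 (by nlinarith)
  linarith

-- Generic expanding-map covering lemma
lemma expanding_cover {F : ℝ → ℝ} {u v b₂ b θ : ℝ} (huv : u < v) (hθ : 1 < θ)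
    (hdiff : ∀ x ∈ Icc u v, HasDerivAt F (deriv F x) x)
    (hder : ∀ x ∈ Icc u v, θ ≤ deriv F x)
    (hFu : F u ≤ b₂) (hFv : b ≤ F v) (hb₂u : b₂ ≤ u) (hvb : v ≤ b)
    (hb₂0 : 0 ≤ b₂) (hb1 : b ≤ 1) :
    ∃ q ∈ Icc u v, F q = q ∧ 1 < deriv F q ∧
      (∀ x ∈ Icc u v, F x = x → x = q) ∧
      ∀ ε > (0:ℝ), Icc b₂ b ⊆ ⋃ n : ℕ, F^[n] '' (Icc (q - ε) (q + ε) ∩ Icc 0 1) := by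
  have hcont : ContinuousOn F (Icc u v) := fun x hx => (hdiff x hx).continuousAt.continuousWithinAt
  -- MVT-type expansion on subintervals
  have hexp : ∀ x y, u ≤ x → x < y → y ≤ v → θ * (y - x) ≤ F y - F x := by
    intro x y hux hxy hyv
    obtain ⟨c, hc, hc2⟩ := exists_hasDerivAt_eq_slope F (deriv F) hxy
      (hcont.mono (Icc_subset_Icc hux hyv))
      (fun z hz => hdiff z ⟨le_trans hux hz.1.le, le_trans hz.2.le hyv⟩)
    have hcm : c ∈ Icc u v := ⟨le_trans hux hc.1.le, le_trans hc.2.le hyv⟩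
    have h1 := hder c hcm
    have hne : y - x ≠ 0 := sub_ne_zero.mpr hxy.ne'
    rw [eq_div_iff hne] at hc2
    nlinarith [hder c hcm]
  -- existence of fixed point via IVT
  have hgu : F u - u ≤ 0 := by linarith
  have hgv : 0 ≤ F v - v := by linarith
  have hivt := intermediate_value_Icc huv.le ((hcont.sub continuousOn_id))
  have h0mem : (0:ℝ) ∈ Icc (F u - u) (F v - v) := ⟨hgu, hgv⟩
  obtain ⟨q, hq, hq0⟩ := hivt h0mem
  have hFq : F q = q := by have : F q - q = 0 := hq0; linarith
  refine ⟨q, hq, hFq, ?_, ?_, ?_⟩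
  · exact lt_of_lt_of_le hθ (hder q hq)
  · -- uniqueness
    intro x hx hFx
    by_contra hne
    rcases lt_or_gt_of_ne hne with h | h
    · have := hexp x q hx.1 h hq.2
      rw [hFq, hFx] at this
      nlinarith
    · have := hexp q x hq.1 h hx.2
      rw [hFq, hFx] at this
      nlinarith
  · -- covering
    intro ε hε
    set A : ℕ → ℝ := fun n => max u (q - θ^n * ε) with hA
    set C : ℕ → ℝ := fun n => min v (q + θ^n * ε) with hC
    have hθp : ∀ n : ℕ, (0:ℝ) < θ^n * ε := fun n => mul_pos (pow_pos (by linarith) n) hε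
    have hAq : ∀ n, A n ≤ q := fun n => max_le hq.1 (by linarith [hθp n])
    have hqC : ∀ n, q ≤ C n := fun n => le_min hq.2 (by linarith [hθp n])
    have hAu : ∀ n, u ≤ A n := fun n => le_max_left _ _
    have hCv : ∀ n, C n ≤ v := fun n => min_le_left _ _
    -- step: F (A n) ≤ A (n+1) and C (n+1) ≤ F (C n)
    have hstepA : ∀ n, F (A n) ≤ A (n+1) := by
      intro n
      rcases le_or_gt (q - θ^n * ε) u with h | h
      · have hAn : A n = u := max_eq_left h
        rw [hAn]
        exact le_trans (le_trans hFu hb₂u) (hAu (n+1))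
      · have hAn : A n = q - θ^n * ε := max_eq_right h.le
        rcases eq_or_lt_of_le (hAq n) with he | hlt
        · rw [he, hFq]
          rw [hAn] at he; exfalso; nlinarith [hθp n]
        · have := hexp (A n) q (hAu n) hlt hq.2
          have h2 : F (A n) ≤ q - θ^(n+1) * ε := by
            rw [hFq] at this
            rw [hAn] at this ⊢
            have e : θ * (q - (q - θ^n * ε)) = θ^(n+1) * ε := by ring
            linarith
          exact le_trans h2 (le_max_right _ _)
    have hstepC : ∀ n, C (n+1) ≤ F (C n) := by
      intro n
      rcases le_or_gt v (q + θ^n * ε) with h | h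
      · have hCn : C n = v := min_eq_left h
        rw [hCn]
        exact le_trans (min_le_left _ _) (le_trans hvb hFv)
      · have hCn : C n = q + θ^n * ε := min_eq_right h.le
        rcases eq_or_lt_of_le (hqC n) with he | hlt
        · exfalso; rw [hCn] at he; nlinarith [hθp n]
        · have := hexp q (C n) hq.1 hlt (hCv n)
          have h2 : q + θ^(n+1) * ε ≤ F (C n) := by
            rw [hFq] at this
            rw [hCn] at this ⊢
            have e : θ * (q + θ^n * ε - q) = θ^(n+1) * ε := by ring
            linarith
          exact le_trans (min_le_right _ _) h2
    -- images contain the intervals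
    have himg : ∀ n, Icc (A n) (C n) ⊆ F^[n] '' (Icc (A 0) (C 0)) := by
      intro n
      induction n with
      | zero => simp
      | succ n ih =>
        have hsub : Icc (A (n+1)) (C (n+1)) ⊆ F '' (Icc (A n) (C n)) := by
          have h1 : Icc (F (A n)) (F (C n)) ⊆ F '' (Icc (A n) (C n)) :=
            intermediate_value_Icc (le_trans (hAq n) (hqC n))
              (hcont.mono (Icc_subset_Icc (hAu n) (hCv n)))
          exact le_trans (Icc_subset_Icc (hstepA n) (hstepC n)) h1
        calc Icc (A (n+1)) (C (n+1)) ⊆ F '' (Icc (A n) (C n)) := hsub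
          _ ⊆ F '' (F^[n] '' (Icc (A 0) (C 0))) := image_mono ih
          _ = F^[n+1] '' (Icc (A 0) (C 0)) := by
              rw [Function.iterate_succ', Set.image_comp]
    -- choose n₀ with θ^n₀ * ε large
    obtain ⟨n₀, hn₀⟩ := pow_unbounded_of_one_lt ((max (q - u) (v - q)) / ε) hθ
    have hbig : max (q - u) (v - q) ≤ θ^n₀ * ε := by
      rw [div_lt_iff₀ hε] at hn₀
      linarith
    have hAn₀ : A n₀ = u := max_eq_left (by
      have := le_trans (le_max_left (q-u) (v-q)) hbig; linarith)
    have hCn₀ : C n₀ = v := min_eq_left (by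
      have := le_trans (le_max_right (q-u) (v-q)) hbig; linarith)
    have hfinal : Icc b₂ b ⊆ F^[n₀+1] '' (Icc (A 0) (C 0)) := by
      have h1 : Icc b₂ b ⊆ Icc (F u) (F v) := Icc_subset_Icc hFu hFv
      have h2 : Icc (F u) (F v) ⊆ F '' (Icc u v) := by
        rcases le_or_gt (F u) (F v) with h | h
        · exact intermediate_value_Icc huv.le hcont
        · intro x hx; exact absurd (le_trans hx.1 hx.2) (not_le.mpr h)
      have h3 : F '' (Icc u v) ⊆ F^[n₀+1] '' (Icc (A 0) (C 0)) := by
        have := himg n₀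
        rw [hAn₀, hCn₀] at this
        calc F '' (Icc u v) ⊆ F '' (F^[n₀] '' (Icc (A 0) (C 0))) := image_mono this
          _ = F^[n₀+1] '' (Icc (A 0) (C 0)) := by rw [Function.iterate_succ', Set.image_comp]
      exact le_trans h1 (le_trans h2 h3)
    have hsub0 : Icc (A 0) (C 0) ⊆ Icc (q - ε) (q + ε) ∩ Icc 0 1 := by
      intro x hx
      simp only [hA, hC, pow_zero, one_mul] at hx
      constructor
      · exact ⟨le_trans (le_max_right _ _) hx.1, le_trans hx.2 (min_le_right _ _)⟩
      · constructor
        · linarith [le_trans (le_max_left u _) hx.1, hb₂u, hb₂0]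
        · linarith [le_trans hx.2 (min_le_left _ _), hvb, hb1]
    intro x hx
    exact mem_iUnion.mpr ⟨n₀+1, image_mono hsub0 (hfinal hx)⟩

structure Stp where
  f : ℝ → ℝ
  β : ℝ
  lam : ℝ
  γ : ℝ
  r₀ : ℝ
  θ : ℝ
  b₀ : ℝ
  js : ℕ
  j3 : ℕ
  hf : ContDiff ℝ 1 f
  maps : Set.MapsTo f (Icc 0 1) (Icc 0 1)
  mono : StrictMonoOn f (Icc 0 1)
  f0 : f 0 = 0
  f1 : f 1 = 1
  fgt : ∀ x ∈ Ioo (0:ℝ) 1, x < f x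
  dβ : deriv f 0 = β
  hβ : 1 < β
  dlam : deriv f 1 = lam
  hlam0 : 0 < lam
  hlam1 : lam < 1
  hlg : lam ≤ γ
  hγ1 : γ < 1
  anti : AntitoneOn (deriv f) (Icc 0 1)
  hr0 : 0 < r₀
  hr1 : r₀ < 1/2
  hρgt : 1 < deriv f r₀
  hLamlt : deriv f (1 - r₀) < 1
  hθle : θ ≤ (1 - deriv f (1-r₀))^2 * (deriv f r₀ - 1) / ((β-1)^3 * β^3)
  hθ : 1 < θ
  hjs : lam⁻¹^4 ≤ (deriv f r₀)^js
  hj3 : lam⁻¹^(js+1) ≤ (deriv f r₀)^j3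
  hb₀0 : 0 < b₀
  hb₀1 : b₀ < 1
  hb₀r : b₀ ≤ γ * r₀
  hb₀j3 : β^j3 * b₀ ≤ r₀
  hb₀γ : b₀ < γ * (1 - b₀)

namespace Stp

variable (S : Stp)

def ρ : ℝ := deriv S.f S.r₀
def Lam : ℝ := deriv S.f (1 - S.r₀)

lemma γ0 : 0 < S.γ := lt_of_lt_of_le S.hlam0 S.hlg

lemma diffble : Differentiable ℝ S.f := S.hf.differentiable one_ne_zero

lemma hder : ∀ x, HasDerivAt S.f (deriv S.f x) x := fun x => (S.diffble x).hasDerivAt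

lemma cont : Continuous S.f := S.hf.continuous

lemma dcont : Continuous (deriv S.f) := S.hf.continuous_deriv le_rfl

lemma lamle {x : ℝ} (hx : x ∈ Icc (0:ℝ) 1) : S.lam ≤ deriv S.f x := by
  have := S.anti hx ⟨zero_le_one, le_refl 1⟩ hx.2
  rw [S.dlam] at this; exact this

lemma derpos {x : ℝ} (hx : x ∈ Icc (0:ℝ) 1) : 0 < deriv S.f x :=
  lt_of_lt_of_le S.hlam0 (S.lamle hx)

lemma derleβ {x : ℝ} (hx : x ∈ Icc (0:ℝ) 1) : deriv S.f x ≤ S.β := by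
  have := S.anti ⟨le_refl 0, zero_le_one⟩ hx hx.1
  rw [S.dβ] at this; exact this

lemma mem01 {x : ℝ} (hx : x ∈ Icc (0:ℝ) 1) : S.f x ∈ Icc (0:ℝ) 1 := S.maps hx

lemma memOo {x : ℝ} (hx : x ∈ Ioo (0:ℝ) 1) : S.f x ∈ Ioo (0:ℝ) 1 := by
  constructor
  · exact lt_trans hx.1 (S.fgt x hx)
  · have : S.f x < S.f 1 := S.mono ⟨hx.1.le, hx.2.le⟩ ⟨zero_le_one, le_refl 1⟩ hx.2
    rwa [S.f1] at this

lemma self_le {x : ℝ} (hx : x ∈ Icc (0:ℝ) 1) : x ≤ S.f x := by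
  rcases eq_or_lt_of_le hx.1 with h | h
  · rw [← h, S.f0]
  · rcases eq_or_lt_of_le hx.2 with h' | h'
    · rw [h', S.f1]
    · exact (S.fgt x ⟨h, h'⟩).le

lemma le_beta {x : ℝ} (hx : x ∈ Icc (0:ℝ) 1) : S.f x ≤ S.β * x := by
  rcases eq_or_lt_of_le hx.1 with h | h
  · rw [← h, S.f0]; simp
  · have := (slope_bounds' S.hder S.anti (le_refl 0) h hx.2).2
    rw [S.f0, S.dβ] at this; linarith

lemma lam_one_sub {x : ℝ} (hx : x ∈ Icc (0:ℝ) 1) : S.lam * (1 - x) ≤ 1 - S.f x := by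
  rcases eq_or_lt_of_le hx.2 with h | h
  · rw [h, S.f1]; simp
  · have := (slope_bounds' S.hder S.anti hx.1 h (le_refl 1)).1
    rw [S.f1, S.dlam] at this; linarith

lemma one_sub_le {x : ℝ} (hx : x ∈ Icc (0:ℝ) 1) (h : x < 1) :
    1 - S.f x ≤ deriv S.f x * (1 - x) := by
  have := (slope_bounds' S.hder S.anti hx.1 h (le_refl 1)).2
  rw [S.f1] at this; linarith

lemma zone_ge {x : ℝ} (hx : 0 ≤ x) (hr : x ≤ S.r₀) : S.ρ * x ≤ S.f x := by
  rcases eq_or_lt_of_le hx with h | h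
  · rw [← h, S.f0]; simp
  · have hx1 : x ≤ 1 := le_trans hr (by linarith [S.hr1])
    have := (slope_bounds' S.hder S.anti (le_refl 0) h hx1).1
    rw [S.f0] at this
    have hanti : S.ρ ≤ deriv S.f x := by
      apply S.anti ⟨hx, hx1⟩ ⟨le_trans hx hr, by linarith [S.hr1]⟩ hr
    nlinarith
  
lemma step_ratio {x : ℝ} (hx : x ∈ Ioo (0:ℝ) 1) :
    S.f (S.f x) - S.f x ≤ deriv S.f x * (S.f x - x) := by
  have h1 : x < S.f x := S.fgt x hx
  have h2 : S.f x ≤ 1 := (S.mem01 ⟨hx.1.le, hx.2.le⟩).2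
  exact (slope_bounds' S.hder S.anti hx.1.le h1 h2).2

lemma iter_memOo {x : ℝ} (hx : x ∈ Ioo (0:ℝ) 1) (n : ℕ) : S.f^[n] x ∈ Ioo (0:ℝ) 1 := by
  induction n with
  | zero => simpa using hx
  | succ n ih => rw [Function.iterate_succ_apply']; exact S.memOo ih

lemma iter_mem01 {x : ℝ} (hx : x ∈ Icc (0:ℝ) 1) (n : ℕ) : S.f^[n] x ∈ Icc (0:ℝ) 1 := by
  induction n with
  | zero => simpa using hx
  | succ n ih => rw [Function.iterate_succ_apply']; exact S.mem01 ih

lemma iter_mono {x y : ℝ} (hx : x ∈ Icc (0:ℝ) 1) (hy : y ∈ Icc (0:ℝ) 1) (hxy : x ≤ y) (n : ℕ) :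
    S.f^[n] x ≤ S.f^[n] y := by
  induction n with
  | zero => simpa
  | succ n ih =>
    rw [Function.iterate_succ_apply', Function.iterate_succ_apply']
    rcases eq_or_lt_of_le ih with h | h
    · rw [h]
    · exact (S.mono (S.iter_mem01 hx n) (S.iter_mem01 hy n) h).le

lemma iter_strict {x y : ℝ} (hx : x ∈ Icc (0:ℝ) 1) (hy : y ∈ Icc (0:ℝ) 1) (hxy : x < y) (n : ℕ) :
    S.f^[n] x < S.f^[n] y := by
  induction n with
  | zero => simpa
  | succ n ih =>
    rw [Function.iterate_succ_apply', Function.iterate_succ_apply']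
    exact S.mono (S.iter_mem01 hx n) (S.iter_mem01 hy n) ih

lemma iter_le_succ {x : ℝ} (hx : x ∈ Icc (0:ℝ) 1) (n : ℕ) : S.f^[n] x ≤ S.f^[n+1] x := by
  rw [Function.iterate_succ_apply']
  exact S.self_le (S.iter_mem01 hx n)

lemma iter_le_iter {x : ℝ} (hx : x ∈ Icc (0:ℝ) 1) {n m : ℕ} (h : n ≤ m) :
    S.f^[n] x ≤ S.f^[m] x := by
  induction m with
  | zero => simp at h; rw [h]
  | succ m ih =>
    rcases Nat.lt_or_ge n (m+1) with h' | h'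
    · exact le_trans (ih (Nat.lt_succ_iff.mp h')) (S.iter_le_succ hx m)
    · have : n = m + 1 := le_antisymm h h'
      rw [this]

lemma iter_le_beta {x : ℝ} (hx : x ∈ Icc (0:ℝ) 1) (n : ℕ) : S.f^[n] x ≤ S.β^n * x := by
  induction n with
  | zero => simp
  | succ n ih =>
    rw [Function.iterate_succ_apply']
    have h1 := S.le_beta (S.iter_mem01 hx n)
    have h2 : S.β * S.f^[n] x ≤ S.β * (S.β^n * x) :=
      mul_le_mul_of_nonneg_left ih (by linarith [S.hβ])
    calc S.f (S.f^[n] x) ≤ S.β * S.f^[n] x := h1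
      _ ≤ S.β * (S.β^n * x) := h2
      _ = S.β^(n+1) * x := by ring

lemma iter_lam {x : ℝ} (hx : x ∈ Icc (0:ℝ) 1) (n : ℕ) :
    S.lam^n * (1 - x) ≤ 1 - S.f^[n] x := by
  induction n with
  | zero => simp
  | succ n ih =>
    rw [Function.iterate_succ_apply']
    have h1 := S.lam_one_sub (S.iter_mem01 hx n)
    have h2 : S.lam * (S.lam^n * (1-x)) ≤ S.lam * (1 - S.f^[n] x) :=
      mul_le_mul_of_nonneg_left ih S.hlam0.le
    calc S.lam^(n+1) * (1-x) = S.lam * (S.lam^n * (1-x)) := by ring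
      _ ≤ S.lam * (1 - S.f^[n] x) := h2
      _ ≤ 1 - S.f (S.f^[n] x) := h1

lemma ρpos : (0:ℝ) < S.ρ := lt_trans one_pos S.hρgt

lemma iter_zone {x : ℝ} (hx : 0 ≤ x) (n : ℕ) (hz : ∀ i < n, S.f^[i] x ≤ S.r₀) :
    S.ρ^n * x ≤ S.f^[n] x := by
  induction n with
  | zero => simp
  | succ n ih =>
    rw [Function.iterate_succ_apply']
    have hzn : ∀ i < n, S.f^[i] x ≤ S.r₀ := fun i hi => hz i (Nat.lt_succ_of_lt hi)
    have ihh := ih hzn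
    have hρn : (0:ℝ) ≤ S.ρ^n * x := mul_nonneg (pow_nonneg S.ρpos.le n) hx
    have h0 : 0 ≤ S.f^[n] x := le_trans hρn ihh
    calc S.ρ^(n+1) * x = S.ρ * (S.ρ^n * x) := by ring
      _ ≤ S.ρ * S.f^[n] x := mul_le_mul_of_nonneg_left ihh S.ρpos.le
      _ ≤ S.f (S.f^[n] x) := S.zone_ge h0 (hz n (Nat.lt_succ_self n))

def prodD (n : ℕ) (x : ℝ) : ℝ := ∏ i ∈ Finset.range n, deriv S.f (S.f^[i] x)

lemma hasDerivAt_iter (n : ℕ) (x : ℝ) : HasDerivAt (S.f^[n]) (S.prodD n x) x := by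
  induction n with
  | zero => simpa [prodD] using hasDerivAt_id x
  | succ n ih =>
    have h := (S.hder (S.f^[n] x)).comp x ih
    have e : S.prodD (n+1) x = deriv S.f (S.f^[n] x) * S.prodD n x := by
      rw [prodD, Finset.prod_range_succ, prodD]; ring
    rw [e]
    have : S.f^[n+1] = S.f ∘ S.f^[n] := Function.iterate_succ' S.f n
    rw [this]
    exact h

lemma prodD_pos {x : ℝ} (hx : x ∈ Icc (0:ℝ) 1) (n : ℕ) : 0 < S.prodD n x := by
  rw [prodD]
  exact Finset.prod_pos (fun i _ => S.derpos (S.iter_mem01 hx i))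

lemma gap_pos {x : ℝ} (hx : x ∈ Ioo (0:ℝ) 1) : 0 < S.f x - x := by
  linarith [S.fgt x hx]

lemma telescope {x : ℝ} (hx : x ∈ Ioo (0:ℝ) 1) (n : ℕ) :
    S.f (S.f^[n] x) - S.f^[n] x ≤ S.prodD n x * (S.f x - x) := by
  induction n with
  | zero => simp [prodD]
  | succ n ih =>
    have hmem := S.iter_memOo hx n
    have hstep := S.step_ratio hmem
    have e : S.prodD (n+1) x = deriv S.f (S.f^[n] x) * S.prodD n x := by
      rw [prodD, Finset.prod_range_succ, prodD]; ring
    have hpos : 0 < deriv S.f (S.f^[n] x) := S.derpos ⟨hmem.1.le, hmem.2.le⟩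
    rw [Function.iterate_succ_apply', e]
    calc S.f (S.f (S.f^[n] x)) - S.f (S.f^[n] x)
        ≤ deriv S.f (S.f^[n] x) * (S.f (S.f^[n] x) - S.f^[n] x) := S.step_ratio hmem
      _ ≤ deriv S.f (S.f^[n] x) * (S.prodD n x * (S.f x - x)) :=
          mul_le_mul_of_nonneg_left ih hpos.le
      _ = deriv S.f (S.f^[n] x) * S.prodD n x * (S.f x - x) := by ring

lemma escape {x : ℝ} (hx : x ∈ Ioo (0:ℝ) 1) {T : ℝ} (hT : T < 1) :
    ∃ n : ℕ, T < S.f^[n] x := by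
  set g : ℕ → ℝ := fun n => S.f^[n] x with hg
  have hmono : Monotone g := by
    apply monotone_nat_of_le_succ
    intro n
    exact S.iter_le_succ ⟨hx.1.le, hx.2.le⟩ n
  have hbdd : BddAbove (Set.range g) := by
    refine ⟨1, ?_⟩
    rintro y ⟨n, rfl⟩
    exact (S.iter_memOo hx n).2.le
  have htend : Tendsto g atTop (nhds (⨆ n, g n)) := tendsto_atTop_ciSup hmono hbdd
  set L := ⨆ n, g n with hL
  have hL1 : L ≤ 1 := ciSup_le (fun n => (S.iter_memOo hx n).2.le)
  have hLx : x ≤ L := le_ciSup hbdd 0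
  have hfix : S.f L = L := by
    have h1 : Tendsto (fun n => S.f (g n)) atTop (nhds (S.f L)) :=
      (S.cont.tendsto L).comp htend
    have h2 : (fun n => S.f (g n)) = fun n => g (n+1) := by
      funext n; simp only [hg]; exact (Function.iterate_succ_apply' S.f n x).symm
    rw [h2] at h1
    have h3 : Tendsto (fun n => g (n+1)) atTop (nhds L) :=
      htend.comp (tendsto_add_atTop_nat 1)
    exact tendsto_nhds_unique h1 h3
  have hL1' : L = 1 := by
    by_contra hne
    have hLlt : L < 1 := lt_of_le_of_ne hL1 hne
    have hLmem : L ∈ Ioo (0:ℝ) 1 := ⟨lt_of_lt_of_le hx.1 hLx, hLlt⟩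
    have := S.fgt L hLmem
    rw [hfix] at this
    exact lt_irrefl L this
  have : T < ⨆ n, g n := by rw [← hL, hL1']; exact hT
  exact exists_lt_of_lt_ciSup this


lemma catchup {a c : ℝ} (ha1 : a ∈ Icc (0:ℝ) 1) (hc : c ≤ S.r₀) {J : ℕ}
    (hJ : c ≤ S.ρ^J * a) : c ≤ S.f^[J] a := by
  by_cases hall : ∀ i < J, S.f^[i] a ≤ S.r₀
  · exact le_trans hJ (S.iter_zone ha1.1 J hall)
  · push_neg at hall
    obtain ⟨i, hiJ, hir⟩ := hall
    exact le_trans hc (le_trans hir.le (S.iter_le_iter ha1 hiJ.le))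

lemma foldl_rep {α : Type*} (g : α → ℝ → ℝ) (a : α) (n : ℕ) (x : ℝ) :
    (List.replicate n a).foldl (fun y i => g i y) x = (g a)^[n] x := by
  induction n generalizing x with
  | zero => simp
  | succ n ih =>
    rw [List.replicate_succ]
    simp only [List.foldl_cons]
    rw [ih]
    exact (Function.iterate_succ_apply (g a) n x).symm

-- THE UNIT LEMMA
set_option maxHeartbeats 2000000 in
lemma unit {b b₃ s t : ℝ} (hb₃ : b₃ ∈ Ioo (0:ℝ) 1) (hb : S.f^[3] b₃ = b)
    (hbb₀ : b ≤ S.b₀) (hs : b₃ < s) (hst : s < t) (htb : t ≤ b) :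
    ∃ F : ℝ → ℝ,
      (∃ w : List (Fin 2), F = fun x => (w.foldl (fun y (i : Fin 2) =>
          (![S.f, fun u => S.γ * (1-u)] i) y) x)) ∧
      (∀ x ∈ Icc s t, ∃ d : ℝ, HasDerivAt F d x ∧ S.θ ≤ d) ∧
      b₃ < F s ∧ F s ≤ S.f b₃ ∧ F t ≤ S.f^[S.j3] (S.f b₃) ∧
      (∀ x x', s ≤ x → x ≤ x' → x' ≤ t → F x ≤ F x') ∧
      (∀ x ∈ Icc s t, F x ∈ Ioo (0:ℝ) 1) := by
  have hγ0 := S.γ0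
  have hγ1 := S.hγ1
  have hl0 := S.hlam0
  have hl1 := S.hlam1
  have hβ := S.hβ
  -- basic facts
  have hb₃01 : b₃ ∈ Icc (0:ℝ) 1 := ⟨hb₃.1.le, hb₃.2.le⟩
  have hbmem : b ∈ Ioo (0:ℝ) 1 := by rw [← hb]; exact S.iter_memOo hb₃ 3
  have hb₃b : b₃ < b := by
    rw [← hb]
    calc b₃ < S.f b₃ := S.fgt b₃ hb₃
      _ ≤ S.f^[3] b₃ := by
          have : S.f^[1] b₃ ≤ S.f^[3] b₃ := S.iter_le_iter hb₃01 (by norm_num)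
          simpa using this
  have hsmem : s ∈ Ioo (0:ℝ) 1 := ⟨lt_trans hb₃.1 hs, lt_of_lt_of_le (lt_of_lt_of_le hst htb) hbmem.2.le⟩
  have htmem : t ∈ Ioo (0:ℝ) 1 := ⟨lt_trans hsmem.1 hst, lt_of_le_of_lt htb hbmem.2⟩
  have hs01 : s ∈ Icc (0:ℝ) 1 := ⟨hsmem.1.le, hsmem.2.le⟩
  have ht01 : t ∈ Icc (0:ℝ) 1 := ⟨htmem.1.le, htmem.2.le⟩
  have hb₃b₀ : b₃ ≤ S.b₀ := le_trans hb₃b.le hbb₀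
  have hb₃r₀ : b₃ ≤ S.r₀ := le_trans hb₃b₀ (le_trans S.hb₀r (by nlinarith [S.hr0]))
  have hb₀r₀ : S.b₀ ≤ S.r₀ := le_trans S.hb₀r (by nlinarith [S.hr0])
  -- threshold facts
  have hthr : ∀ w : ℝ, w ∈ Icc (0:ℝ) 1 → S.γ * (1 - w) < b₃ → 1 - S.r₀ ≤ w := by
    intro w hw hlt
    have h1 : S.γ * (1 - w) < b₃ := hlt
    have h2 : 1 - w < b₃ / S.γ := by rw [lt_div_iff₀ hγ0]; linarith [mul_comm S.γ (1-w)]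
    have h3 : b₃ / S.γ ≤ S.r₀ := by
      rw [div_le_iff₀ hγ0]
      calc b₃ ≤ S.b₀ := hb₃b₀
        _ ≤ S.γ * S.r₀ := S.hb₀r
        _ = S.r₀ * S.γ := mul_comm _ _
    linarith
  have hΛlt : S.Lam < 1 := S.hLamlt
  have hΛderiv : ∀ w : ℝ, w ∈ Icc (0:ℝ) 1 → 1 - S.r₀ ≤ w → deriv S.f w ≤ S.Lam := by
    intro w hw h
    exact S.anti ⟨by linarith [S.hr1], by linarith [S.hr0]⟩ hw h
  -- gap lower bound near 1
  have hgap1 : ∀ w : ℝ, w ∈ Icc (0:ℝ) 1 → 1 - S.r₀ ≤ w → w < 1 →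
      (1 - S.Lam) * (1 - w) ≤ S.f w - w := by
    intro w hw h hw1
    have h1 := S.one_sub_le hw hw1
    have h2 := hΛderiv w hw h
    nlinarith [S.hLamlt]
  -- small quantities don't exceed threshold
  have hsmall : ∀ w : ℝ, w ≤ S.b₀ → ¬ (S.γ * (1 - w) < b₃) := by
    intro w hw hcon
    have : S.γ * (1 - S.b₀) ≤ S.γ * (1 - w) := by nlinarith
    linarith [S.hb₀γ, hb₃b₀]
  -- FIRST CLIMB
  have hex1 : ∃ n : ℕ, S.γ * (1 - S.f^[n] s) < b₃ := by
    obtain ⟨n, hn⟩ := S.escape hsmem (show 1 - b₃ / S.γ < 1 by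
      have : 0 < b₃ / S.γ := div_pos hb₃.1 hγ0; linarith)
    refine ⟨n, ?_⟩
    have : 1 - S.f^[n] s < b₃ / S.γ := by linarith
    calc S.γ * (1 - S.f^[n] s) < S.γ * (b₃ / S.γ) := by
          apply mul_lt_mul_of_pos_left this hγ0
      _ = b₃ := by field_simp
  set n := Nat.find hex1 with hndef
  have hn : S.γ * (1 - S.f^[n] s) < b₃ := Nat.find_spec hex1
  have hsb₀ : s ≤ S.b₀ := le_trans (le_trans hst.le htb) hbb₀
  have hn1 : 1 ≤ n := by
    by_contra h
    push_neg at h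
    have h0 : n = 0 := by omega
    rw [h0] at hn
    simp only [Function.iterate_zero, id_eq] at hn
    exact hsmall s hsb₀ hn
  -- minimality consequence at n-1
  obtain ⟨n', hn'⟩ : ∃ n', n = n' + 1 := ⟨n - 1, (Nat.succ_pred_eq_of_pos hn1).symm⟩
  have hnmin : b₃ ≤ S.γ * (1 - S.f^[n'] s) := by
    have := Nat.find_min hex1 (show n' < n by omega)
    push_neg at this
    exact this
  -- y definitions
  set f₁ : ℝ → ℝ := fun u => S.γ * (1 - u) with hf₁
  set y : ℝ → ℝ := f₁ ∘ S.f^[n] with hy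
  have hyval : ∀ x, y x = S.γ * (1 - S.f^[n] x) := fun x => rfl
  have hymem : ∀ x ∈ Icc s t, y x ∈ Ioo (0:ℝ) 1 := by
    intro x hx
    have hx01 : x ∈ Icc (0:ℝ) 1 := ⟨le_trans hs01.1 hx.1, le_trans hx.2 ht01.2⟩
    have hxoo : x ∈ Ioo (0:ℝ) 1 := ⟨lt_of_lt_of_le hsmem.1 hx.1, lt_of_le_of_lt hx.2 htmem.2⟩
    have h1 := S.iter_memOo hxoo n
    rw [hyval]
    constructor
    · have : 1 - S.f^[n] x > 0 := by linarith [h1.2]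
      positivity
    · nlinarith [h1.1]
  have hyles : ∀ x ∈ Icc s t, y x ≤ y s := by
    intro x hx
    have hx01 : x ∈ Icc (0:ℝ) 1 := ⟨le_trans hs01.1 hx.1, le_trans hx.2 ht01.2⟩
    have := S.iter_mono hs01 hx01 hx.1 n
    rw [hyval, hyval]; nlinarith
  have hyget : ∀ x ∈ Icc s t, y t ≤ y x := by
    intro x hx
    have hx01 : x ∈ Icc (0:ℝ) 1 := ⟨le_trans hs01.1 hx.1, le_trans hx.2 ht01.2⟩
    have := S.iter_mono hx01 ht01 hx.2 n
    rw [hyval, hyval]; nlinarith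
  have hys : y s < b₃ := by rw [hyval]; exact hn
  -- lower bound for y s via minimality
  have hysl : S.lam * b₃ ≤ y s := by
    rw [hyval, hn']
    have h1 : S.f^[n'+1] s = S.f (S.f^[n'] s) := Function.iterate_succ_apply' S.f n' s
    rw [h1]
    have h2 := S.lam_one_sub (S.iter_mem01 hs01 n')
    have h3 : b₃ ≤ S.γ * (1 - S.f^[n'] s) := hnmin
    nlinarith
  -- t is at most 3 steps ahead of s
  have hts3 : t ≤ S.f^[3] s := by
    have := S.iter_strict hb₃01 hs01 hs 3
    rw [hb] at this
    linarith
  -- y t lower bound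
  have hytl : S.lam^4 * b₃ ≤ y t := by
    have h1 : S.f^[n] t ≤ S.f^[3] (S.f^[n] s) := by
      have h2 : S.f^[n] t ≤ S.f^[n] (S.f^[3] s) :=
        S.iter_mono ht01 (S.iter_mem01 hs01 3) hts3 n
      calc S.f^[n] t ≤ S.f^[n] (S.f^[3] s) := h2
        _ = S.f^[n+3] s := (Function.iterate_add_apply S.f n 3 s).symm
        _ = S.f^[3+n] s := by rw [Nat.add_comm]
        _ = S.f^[3] (S.f^[n] s) := Function.iterate_add_apply S.f 3 n s
    have h5 := S.iter_lam (S.iter_mem01 hs01 n) 3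
    have h6 : S.lam^3 * (1 - S.f^[n] s) ≤ 1 - S.f^[n] t := by linarith
    rw [hyval]
    have p3 : (0:ℝ) < S.lam^3 := pow_pos hl0 3
    have q1 : S.γ * (S.lam^3 * (1 - S.f^[n] s)) ≤ S.γ * (1 - S.f^[n] t) :=
      mul_le_mul_of_nonneg_left h6 hγ0.le
    have hysl' : S.lam * b₃ ≤ S.γ * (1 - S.f^[n] s) := by
      have := hysl; rw [hyval] at this; exact this
    have q2 : S.lam^3 * (S.lam * b₃) ≤ S.lam^3 * (S.γ * (1 - S.f^[n] s)) :=
      mul_le_mul_of_nonneg_left hysl' p3.le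
    have e1 : S.γ * (S.lam^3 * (1 - S.f^[n] s)) = S.lam^3 * (S.γ * (1 - S.f^[n] s)) := by ring
    have e2 : S.lam^3 * (S.lam * b₃) = S.lam^4 * b₃ := by ring
    linarith
  have hytpos : 0 < y t := lt_of_lt_of_le (mul_pos (pow_pos hl0 4) hb₃.1) hytl
  have hyt01 : y t ∈ Ioo (0:ℝ) 1 := hymem t ⟨hst.le, le_refl t⟩
  -- threshold for first climb: for all x in [s,t]
  have hfn_thr : ∀ x ∈ Icc s t, 1 - S.r₀ ≤ S.f^[n] x := by
    intro x hx
    have hx01 : x ∈ Icc (0:ℝ) 1 := ⟨le_trans hs01.1 hx.1, le_trans hx.2 ht01.2⟩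
    have h1 := S.iter_mono hs01 hx01 hx.1 n
    have h2 := hthr (S.f^[n] s) (S.iter_mem01 hs01 n) hn
    linarith
  -- SECOND CLIMB
  have hex2 : ∃ k : ℕ, S.γ * (1 - S.f^[k] (y t)) < b₃ := by
    obtain ⟨k, hk⟩ := S.escape hyt01 (show 1 - b₃ / S.γ < 1 by
      have : 0 < b₃ / S.γ := div_pos hb₃.1 hγ0; linarith)
    refine ⟨k, ?_⟩
    have : 1 - S.f^[k] (y t) < b₃ / S.γ := by linarith
    calc S.γ * (1 - S.f^[k] (y t)) < S.γ * (b₃ / S.γ) := mul_lt_mul_of_pos_left this hγ0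
      _ = b₃ := by field_simp
  set k := Nat.find hex2 with hkdef
  have hk : S.γ * (1 - S.f^[k] (y t)) < b₃ := Nat.find_spec hex2
  have hytb₀ : y t ≤ S.b₀ := le_trans (hyles t ⟨hst.le, le_refl t⟩) (le_trans hys.le hb₃b₀)
  have hk1 : 1 ≤ k := by
    by_contra h
    push_neg at h
    have h0 : k = 0 := by omega
    rw [h0] at hk
    simp only [Function.iterate_zero, id_eq] at hk
    exact hsmall (y t) hytb₀ hk
  obtain ⟨k', hk'⟩ : ∃ k', k = k' + 1 := ⟨k - 1, (Nat.succ_pred_eq_of_pos hk1).symm⟩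
  have hkmin : b₃ ≤ S.γ * (1 - S.f^[k'] (y t)) := by
    have := Nat.find_min hex2 (show k' < k by omega)
    push_neg at this
    exact this
  set z : ℝ → ℝ := f₁ ∘ S.f^[k] ∘ y with hz
  have hzval : ∀ x, z x = S.γ * (1 - S.f^[k] (y x)) := fun x => rfl
  have hy01 : ∀ x ∈ Icc s t, y x ∈ Icc (0:ℝ) 1 := by
    intro x hx; have := hymem x hx; exact ⟨this.1.le, this.2.le⟩
  have hzmem : ∀ x ∈ Icc s t, z x ∈ Ioo (0:ℝ) 1 := by
    intro x hx
    have h1 := S.iter_memOo (hymem x hx) k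
    rw [hzval]
    constructor
    · have : 1 - S.f^[k] (y x) > 0 := by linarith [h1.2]
      positivity
    · have h2 : S.γ * (1 - S.f^[k] (y x)) < S.γ * 1 :=
        mul_lt_mul_of_pos_left (by linarith [h1.1]) hγ0
      linarith
  have hzlet : ∀ x ∈ Icc s t, z x ≤ z t := by
    intro x hx
    have := S.iter_mono (hy01 t ⟨hst.le, le_refl t⟩) (hy01 x hx) (hyget x hx) k
    rw [hzval, hzval]
    exact mul_le_mul_of_nonneg_left (by linarith) hγ0.le
  have hzges : ∀ x ∈ Icc s t, z s ≤ z x := by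
    intro x hx
    have := S.iter_mono (hy01 x hx) (hy01 s ⟨le_refl s, hst.le⟩) (hyles x hx) k
    rw [hzval, hzval]
    exact mul_le_mul_of_nonneg_left (by linarith) hγ0.le
  have hzt : z t < b₃ := by rw [hzval]; exact hk
  have hztl : S.lam * b₃ ≤ z t := by
    rw [hzval, hk']
    have h1 : S.f^[k'+1] (y t) = S.f (S.f^[k'] (y t)) := Function.iterate_succ_apply' S.f k' (y t)
    rw [h1]
    have h2 := S.lam_one_sub (S.iter_mem01 (hy01 t ⟨hst.le, le_refl t⟩) k')
    have q1 : S.γ * (S.lam * (1 - S.f^[k'] (y t))) ≤ S.γ * (1 - S.f (S.f^[k'] (y t))) :=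
      mul_le_mul_of_nonneg_left h2 hγ0.le
    have q2 : S.lam * b₃ ≤ S.lam * (S.γ * (1 - S.f^[k'] (y t))) :=
      mul_le_mul_of_nonneg_left hkmin hl0.le
    have e : S.γ * (S.lam * (1 - S.f^[k'] (y t))) = S.lam * (S.γ * (1 - S.f^[k'] (y t))) := by ring
    linarith
  -- y s is at most js steps ahead of y t
  have hyjs : y s ≤ S.f^[S.js] (y t) := by
    apply S.catchup (hy01 t ⟨hst.le, le_refl t⟩) (le_trans hys.le hb₃r₀)
    have h1 : S.ρ^(S.js) * (S.lam^4 * b₃) ≤ S.ρ^(S.js) * y t :=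
      mul_le_mul_of_nonneg_left hytl (pow_nonneg S.ρpos.le _)
    have h2 : b₃ ≤ S.ρ^(S.js) * (S.lam^4 * b₃) := by
      have h3 : S.lam⁻¹^4 ≤ S.ρ^(S.js) := S.hjs
      have h4 : S.lam⁻¹^4 * (S.lam^4 * b₃) = b₃ := by
        field_simp
      have h5 : S.lam⁻¹^4 * (S.lam^4 * b₃) ≤ S.ρ^(S.js) * (S.lam^4 * b₃) :=
        mul_le_mul_of_nonneg_right h3 (mul_nonneg (pow_nonneg hl0.le 4) hb₃.1.le)
      rw [h4] at h5
      exact h5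
    linarith [le_trans h2 h1, hys]
  -- z s lower bound
  have hzsl : S.lam^(S.js) * z t ≤ z s := by
    have h1 : S.f^[k] (y s) ≤ S.f^[S.js] (S.f^[k] (y t)) := by
      calc S.f^[k] (y s) ≤ S.f^[k] (S.f^[S.js] (y t)) :=
            S.iter_mono (hy01 s ⟨le_refl s, hst.le⟩) (S.iter_mem01 (hy01 t ⟨hst.le, le_refl t⟩) _) hyjs k
        _ = S.f^[k + S.js] (y t) := (Function.iterate_add_apply S.f k S.js (y t)).symm
        _ = S.f^[S.js + k] (y t) := by rw [Nat.add_comm]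
        _ = S.f^[S.js] (S.f^[k] (y t)) := Function.iterate_add_apply S.f S.js k (y t)
    have h2 := S.iter_lam (S.iter_mem01 (hy01 t ⟨hst.le, le_refl t⟩) k) S.js
    rw [hzval, hzval]
    have h3 : 1 - S.f^[S.js] (S.f^[k] (y t)) ≤ 1 - S.f^[k] (y s) := by linarith
    have h4 : S.lam^(S.js) * (1 - S.f^[k] (y t)) ≤ 1 - S.f^[k] (y s) := by linarith
    have q := mul_le_mul_of_nonneg_left h4 hγ0.le
    have e : S.γ * (S.lam^(S.js) * (1 - S.f^[k] (y t))) = S.lam^(S.js) * (S.γ * (1 - S.f^[k] (y t))) := by ring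
    linarith
  have hzspos : 0 < z s := (hzmem s ⟨le_refl s, hst.le⟩).1
  have hzsl2 : S.lam^(S.js+1) * b₃ ≤ z s := by
    have h1 : S.lam^(S.js) * (S.lam * b₃) ≤ S.lam^(S.js) * z t :=
      mul_le_mul_of_nonneg_left hztl (pow_nonneg hl0.le _)
    have e : S.lam^(S.js) * (S.lam * b₃) = S.lam^(S.js+1) * b₃ := by ring
    linarith
  -- threshold for second climb
  have hfk_thr : ∀ x ∈ Icc s t, 1 - S.r₀ ≤ S.f^[k] (y x) := by
    intro x hx
    have h1 := S.iter_mono (hy01 t ⟨hst.le, le_refl t⟩) (hy01 x hx) (hyget x hx) k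
    have h2 := hthr (S.f^[k] (y t)) (S.iter_mem01 (hy01 t ⟨hst.le, le_refl t⟩) k) hk
    linarith
  -- THIRD CLIMB
  have hzs01 : z s ∈ Ioo (0:ℝ) 1 := hzmem s ⟨le_refl s, hst.le⟩
  have hex3 : ∃ m : ℕ, b₃ < S.f^[m] (z s) := S.escape hzs01 hb₃.2
  set m := Nat.find hex3 with hmdef
  have hm : b₃ < S.f^[m] (z s) := Nat.find_spec hex3
  have hzsb₃ : z s < b₃ := lt_of_le_of_lt (hzlet s ⟨le_refl s, hst.le⟩) hzt
  have hm1 : 1 ≤ m := by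
    by_contra h
    push_neg at h
    have h0 : m = 0 := by omega
    rw [h0] at hm
    simp only [Function.iterate_zero, id_eq] at hm
    linarith
  obtain ⟨m', hm'⟩ : ∃ m', m = m' + 1 := ⟨m - 1, (Nat.succ_pred_eq_of_pos hm1).symm⟩
  have hmmin : S.f^[m'] (z s) ≤ b₃ := by
    have := Nat.find_min hex3 (show m' < m by omega)
    push_neg at this
    exact this
  set F : ℝ → ℝ := S.f^[m] ∘ z with hF
  have hFval : ∀ x, F x = S.f^[m] (z x) := fun x => rfl
  have hz01 : ∀ x ∈ Icc s t, z x ∈ Icc (0:ℝ) 1 := by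
    intro x hx; have := hzmem x hx; exact ⟨this.1.le, this.2.le⟩
  -- F s bounds
  have hFs1 : b₃ < F s := hm
  have hFs2 : F s ≤ S.f b₃ := by
    rw [hFval, hm']
    have h1 : S.f^[m'+1] (z s) = S.f (S.f^[m'] (z s)) := Function.iterate_succ_apply' S.f m' (z s)
    rw [h1]
    rcases eq_or_lt_of_le hmmin with he | hlt
    · rw [he]
    · exact (S.mono (S.iter_mem01 (hz01 s ⟨le_refl s, hst.le⟩) m') hb₃01 hlt).le
  -- z t at most j3 steps ahead of z s
  have hztj3 : z t ≤ S.f^[S.j3] (z s) := by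
    apply S.catchup (hz01 s ⟨le_refl s, hst.le⟩) (le_trans hzt.le hb₃r₀)
    have h3 : S.lam⁻¹^(S.js+1) ≤ S.ρ^(S.j3) := S.hj3
    have h4 : S.lam⁻¹^(S.js+1) * (S.lam^(S.js+1) * b₃) = b₃ := by
      rw [← mul_assoc, ← mul_pow, inv_mul_cancel₀ hl0.ne', one_pow, one_mul]
    have h5 : S.lam⁻¹^(S.js+1) * (S.lam^(S.js+1) * b₃) ≤ S.ρ^(S.j3) * (S.lam^(S.js+1) * b₃) :=
      mul_le_mul_of_nonneg_right h3 (mul_nonneg (pow_nonneg hl0.le _) hb₃.1.le)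
    rw [h4] at h5
    have h6 : S.ρ^(S.j3) * (S.lam^(S.js+1) * b₃) ≤ S.ρ^(S.j3) * z s :=
      mul_le_mul_of_nonneg_left hzsl2 (pow_nonneg S.ρpos.le _)
    linarith
  -- F t bound
  have hFt : F t ≤ S.f^[S.j3] (S.f b₃) := by
    rw [hFval]
    calc S.f^[m] (z t) ≤ S.f^[m] (S.f^[S.j3] (z s)) :=
          S.iter_mono (hz01 t ⟨hst.le, le_refl t⟩)
            (S.iter_mem01 (hz01 s ⟨le_refl s, hst.le⟩) _) hztj3 m
      _ = S.f^[m + S.j3] (z s) := (Function.iterate_add_apply S.f m S.j3 (z s)).symm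
      _ = S.f^[S.j3 + m] (z s) := by rw [Nat.add_comm]
      _ = S.f^[S.j3] (S.f^[m] (z s)) := Function.iterate_add_apply S.f S.j3 m (z s)
      _ ≤ S.f^[S.j3] (S.f b₃) := by
          apply S.iter_mono (S.iter_mem01 (hz01 s ⟨le_refl s, hst.le⟩) m)
            (S.mem01 hb₃01) _ S.j3
          have := hFs2; rw [hFval] at this; exact this
  -- cap: f^[j3] (f b₃) ≤ r₀
  have hcap : S.f^[S.j3] (S.f b₃) ≤ S.r₀ := by
    have h1 : S.f b₃ ∈ Icc (0:ℝ) 1 := S.mem01 hb₃01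
    have h2 := S.iter_le_beta h1 S.j3
    have h3 : S.f b₃ ≤ S.b₀ := by
      have h4 : S.f b₃ ≤ S.f^[3] b₃ := by
        have : S.f^[1] b₃ ≤ S.f^[3] b₃ := S.iter_le_iter hb₃01 (by norm_num)
        simpa using this
      rw [hb] at h4
      exact le_trans h4 hbb₀
    have h5 : S.β^(S.j3) * S.f b₃ ≤ S.β^(S.j3) * S.b₀ :=
      mul_le_mul_of_nonneg_left h3 (pow_nonneg (by linarith) _)
    exact le_trans h2 (le_trans h5 S.hb₀j3)
  -- monotonicity of F on [s,t]
  have hzmono : ∀ x x', s ≤ x → x ≤ x' → x' ≤ t → z x ≤ z x' := by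
    intro x x' h1 h2 h3
    have hx : x ∈ Icc s t := ⟨h1, le_trans h2 h3⟩
    have hx' : x' ∈ Icc s t := ⟨le_trans h1 h2, h3⟩
    have hx01 : x ∈ Icc (0:ℝ) 1 := ⟨le_trans hs01.1 hx.1, le_trans hx.2 ht01.2⟩
    have hx'01 : x' ∈ Icc (0:ℝ) 1 := ⟨le_trans hs01.1 hx'.1, le_trans hx'.2 ht01.2⟩
    have q1 : S.f^[n] x ≤ S.f^[n] x' := S.iter_mono hx01 hx'01 h2 n
    have q2 : y x' ≤ y x := by
      rw [hyval, hyval]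
      exact mul_le_mul_of_nonneg_left (by linarith) hγ0.le
    have q3 : S.f^[k] (y x') ≤ S.f^[k] (y x) := S.iter_mono (hy01 x' hx') (hy01 x hx) q2 k
    rw [hzval, hzval]
    exact mul_le_mul_of_nonneg_left (by linarith) hγ0.le
  have hFmono : ∀ x x', s ≤ x → x ≤ x' → x' ≤ t → F x ≤ F x' := by
    intro x x' h1 h2 h3
    have hx : x ∈ Icc s t := ⟨h1, le_trans h2 h3⟩
    have hx' : x' ∈ Icc s t := ⟨le_trans h1 h2, h3⟩
    rw [hFval, hFval]
    exact S.iter_mono (hz01 x hx) (hz01 x' hx') (hzmono x x' h1 h2 h3) m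
  have hFmem : ∀ x ∈ Icc s t, F x ∈ Ioo (0:ℝ) 1 := by
    intro x hx
    rw [hFval]
    exact S.iter_memOo (hzmem x hx) m
  -- DERIVATIVE BOUND
  have hρ1 : 1 < S.ρ := S.hρgt
  have hc0 : (0:ℝ) < S.β - 1 := by linarith only [hβ]
  have hΛ0 : 0 < 1 - S.Lam := by linarith only [hΛlt]
  have hdγ : ∀ w : ℝ, HasDerivAt f₁ (-S.γ) w := by
    intro w
    have : HasDerivAt (fun u : ℝ => S.γ * (1 - u)) (S.γ * (-1)) w :=
      (((hasDerivAt_id w).const_sub 1)).const_mul S.γ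
    simpa using this
  have hderiv : ∀ x ∈ Icc s t, ∃ d : ℝ, HasDerivAt F d x ∧ S.θ ≤ d := by
    intro x hx
    have hx01 : x ∈ Icc (0:ℝ) 1 := ⟨le_trans hs01.1 hx.1, le_trans hx.2 ht01.2⟩
    have hxoo : x ∈ Ioo (0:ℝ) 1 := ⟨lt_of_lt_of_le hsmem.1 hx.1, lt_of_le_of_lt hx.2 htmem.2⟩
    set P1 := S.prodD n x with hP1
    set P2 := S.prodD k (y x) with hP2
    set P3 := S.prodD m (z x) with hP3
    have P1pos : 0 < P1 := S.prodD_pos hx01 n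
    have P2pos : 0 < P2 := S.prodD_pos (hy01 x hx) k
    have P3pos : 0 < P3 := S.prodD_pos (hz01 x hx) m
    -- derivative existence
    have hd1 : HasDerivAt (S.f^[n]) P1 x := S.hasDerivAt_iter n x
    have hy_d : HasDerivAt y (-S.γ * P1) x := (hdγ (S.f^[n] x)).comp x hd1
    have hd2 : HasDerivAt (S.f^[k]) P2 (y x) := S.hasDerivAt_iter k (y x)
    have hky : HasDerivAt (S.f^[k] ∘ y) (P2 * (-S.γ * P1)) x := hd2.comp x hy_d
    have hz_d : HasDerivAt z (-S.γ * (P2 * (-S.γ * P1))) x :=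
      (hdγ (S.f^[k] (y x))).comp x hky
    have hd3 : HasDerivAt (S.f^[m]) P3 (z x) := S.hasDerivAt_iter m (z x)
    have hF_d : HasDerivAt F (P3 * (-S.γ * (P2 * (-S.γ * P1)))) x := hd3.comp x hz_d
    refine ⟨_, hF_d, ?_⟩
    -- the bound
    have ypos : 0 < y x := (hymem x hx).1
    have zpos : 0 < z x := (hzmem x hx).1
    have T1 := S.telescope hxoo n
    have T2 := S.telescope (hymem x hx) k
    have T3 := S.telescope (hzmem x hx) m
    have gx : S.f x - x ≤ (S.β - 1) * x := by
      have h := S.le_beta hx01; linarith only [h]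
    have gy : S.f (y x) - y x ≤ (S.β - 1) * (y x) := by
      have h := S.le_beta (hy01 x hx); linarith only [h]
    have gz : S.f (z x) - z x ≤ (S.β - 1) * (z x) := by
      have h := S.le_beta (hz01 x hx); linarith only [h]
    have L1 : (1 - S.Lam) * (1 - S.f^[n] x) ≤ S.f (S.f^[n] x) - S.f^[n] x :=
      hgap1 _ (S.iter_mem01 hx01 n) (hfn_thr x hx) (S.iter_memOo hxoo n).2
    have L2 : (1 - S.Lam) * (1 - S.f^[k] (y x)) ≤ S.f (S.f^[k] (y x)) - S.f^[k] (y x) :=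
      hgap1 _ (S.iter_mem01 (hy01 x hx) k) (hfk_thr x hx) (S.iter_memOo (hymem x hx) k).2
    have hFxr₀ : S.f^[m] (z x) ≤ S.r₀ := by
      have h1 : F x ≤ F t := hFmono x t hx.1 hx.2 (le_refl t)
      have := le_trans h1 (le_trans hFt hcap)
      rw [hFval] at this; exact this
    have hFxb₃ : b₃ ≤ S.f^[m] (z x) := by
      have h1 : F s ≤ F x := hFmono s x (le_refl s) hx.1 hx.2
      have := le_trans hFs1.le h1
      rw [hFval] at this; exact this
    have hFx0 : 0 ≤ S.f^[m] (z x) := le_trans hb₃.1.le hFxb₃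
    have L3 : (S.ρ - 1) * b₃ ≤ S.f (S.f^[m] (z x)) - S.f^[m] (z x) := by
      have h1 := S.zone_ge hFx0 hFxr₀
      have h2 : (S.ρ - 1) * b₃ ≤ (S.ρ - 1) * S.f^[m] (z x) :=
        mul_le_mul_of_nonneg_left hFxb₃ (by linarith only [hρ1])
      linarith only [h1, h2]
    -- assemble A1, A2, A3
    have B1 : P1 * (S.f x - x) ≤ P1 * ((S.β-1) * x) := mul_le_mul_of_nonneg_left gx P1pos.le
    have B2 : P2 * (S.f (y x) - y x) ≤ P2 * ((S.β-1) * (y x)) := mul_le_mul_of_nonneg_left gy P2pos.le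
    have B3 : P3 * (S.f (z x) - z x) ≤ P3 * ((S.β-1) * (z x)) := mul_le_mul_of_nonneg_left gz P3pos.le
    have u1 : (1 - S.Lam) * (1 - S.f^[n] x) ≤ P1 * ((S.β-1) * x) :=
      le_trans L1 (le_trans T1 B1)
    have u2 : (1 - S.Lam) * (1 - S.f^[k] (y x)) ≤ P2 * ((S.β-1) * (y x)) :=
      le_trans L2 (le_trans T2 B2)
    have A3 : (S.ρ - 1) * b₃ ≤ P3 * ((S.β-1) * (z x)) :=
      le_trans L3 (le_trans T3 B3)
    have A1 : (1 - S.Lam) * (y x) ≤ S.γ * (P1 * ((S.β-1) * x)) := by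
      have q := mul_le_mul_of_nonneg_left u1 hγ0.le
      have e : S.γ * ((1 - S.Lam) * (1 - S.f^[n] x)) = (1 - S.Lam) * (S.γ * (1 - S.f^[n] x)) := by
        ring
      rw [e] at q
      rw [hyval]
      exact q
    have A2 : (1 - S.Lam) * (z x) ≤ S.γ * (P2 * ((S.β-1) * (y x))) := by
      have q := mul_le_mul_of_nonneg_left u2 hγ0.le
      have e : S.γ * ((1 - S.Lam) * (1 - S.f^[k] (y x))) = (1 - S.Lam) * (S.γ * (1 - S.f^[k] (y x))) := by
        ring
      rw [e] at q
      rw [hzval]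
      exact q
    -- multiply up
    have xpos : 0 < x := hxoo.1
    have R1pos : (0:ℝ) ≤ S.γ * (P1 * ((S.β-1) * x)) :=
      le_of_lt (by positivity)
    have R2pos : (0:ℝ) ≤ S.γ * (P2 * ((S.β-1) * (y x))) := le_of_lt (by positivity)
    have M1 : ((1 - S.Lam) * (y x)) * ((1 - S.Lam) * (z x)) ≤
        (S.γ * (P1 * ((S.β-1) * x))) * (S.γ * (P2 * ((S.β-1) * (y x)))) :=
      mul_le_mul A1 A2 (mul_nonneg hΛ0.le zpos.le) R1pos
    have M2 : (((1 - S.Lam) * (y x)) * ((1 - S.Lam) * (z x))) * ((S.ρ - 1) * b₃) ≤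
        ((S.γ * (P1 * ((S.β-1) * x))) * (S.γ * (P2 * ((S.β-1) * (y x))))) * (P3 * ((S.β-1) * (z x))) :=
      mul_le_mul M1 A3 (mul_nonneg (by linarith) hb₃.1.le)
        (mul_nonneg R1pos R2pos)
    have eL : (((1 - S.Lam) * (y x)) * ((1 - S.Lam) * (z x))) * ((S.ρ - 1) * b₃) =
        ((1 - S.Lam)^2 * (S.ρ - 1) * b₃) * ((y x) * (z x)) := by ring
    have eR : ((S.γ * (P1 * ((S.β-1) * x))) * (S.γ * (P2 * ((S.β-1) * (y x))))) * (P3 * ((S.β-1) * (z x))) =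
        (S.γ^2 * (P3 * (P2 * P1)) * ((S.β-1)^3 * x)) * ((y x) * (z x)) := by ring
    rw [eL, eR] at M2
    have K : (1 - S.Lam)^2 * (S.ρ - 1) * b₃ ≤ S.γ^2 * (P3 * (P2 * P1)) * ((S.β-1)^3 * x) :=
      le_of_mul_le_mul_right M2 (mul_pos ypos zpos)
    -- θ bound
    have hBpos : (0:ℝ) < (S.β-1)^3 * S.β^3 := by positivity
    have hθc : S.θ * ((S.β-1)^3 * S.β^3) ≤ (1 - S.Lam)^2 * (S.ρ - 1) := by
      have h := S.hθle
      rw [le_div_iff₀ hBpos] at h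
      exact h
    have hxb : x ≤ S.β^3 * b₃ := by
      have h1 : t ≤ S.β^3 * b₃ := by
        have h := S.iter_le_beta hb₃01 3
        rw [hb] at h
        linarith only [h, htb]
      linarith only [h1, hx.2]
    have Ppos : (0:ℝ) < S.γ^2 * (P3 * (P2 * P1)) := by positivity
    have hstep : S.γ^2 * (P3 * (P2 * P1)) * ((S.β-1)^3 * x) ≤
        S.γ^2 * (P3 * (P2 * P1)) * ((S.β-1)^3 * (S.β^3 * b₃)) := by
      apply mul_le_mul_of_nonneg_left _ Ppos.le
      exact mul_le_mul_of_nonneg_left hxb (by positivity)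
    have hθb : S.θ * ((S.β-1)^3 * S.β^3) * b₃ ≤ (1 - S.Lam)^2 * (S.ρ - 1) * b₃ :=
      mul_le_mul_of_nonneg_right hθc hb₃.1.le
    have hfin : S.θ * ((S.β-1)^3 * S.β^3) * b₃ ≤
        S.γ^2 * (P3 * (P2 * P1)) * ((S.β-1)^3 * S.β^3) * b₃ :=
      calc S.θ * ((S.β-1)^3 * S.β^3) * b₃ ≤ (1 - S.Lam)^2 * (S.ρ - 1) * b₃ := hθb
        _ ≤ S.γ^2 * (P3 * (P2 * P1)) * ((S.β-1)^3 * x) := K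
        _ ≤ S.γ^2 * (P3 * (P2 * P1)) * ((S.β-1)^3 * (S.β^3 * b₃)) := hstep
        _ = S.γ^2 * (P3 * (P2 * P1)) * ((S.β-1)^3 * S.β^3) * b₃ := by ring
    have hQpos : (0:ℝ) < ((S.β-1)^3 * S.β^3) * b₃ := mul_pos hBpos hb₃.1
    have hθP : S.θ ≤ S.γ^2 * (P3 * (P2 * P1)) := by
      have e1 : S.θ * ((S.β-1)^3 * S.β^3) * b₃ = S.θ * (((S.β-1)^3 * S.β^3) * b₃) := by ring
      have e2 : S.γ^2 * (P3 * (P2 * P1)) * ((S.β-1)^3 * S.β^3) * b₃ =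
          (S.γ^2 * (P3 * (P2 * P1))) * (((S.β-1)^3 * S.β^3) * b₃) := by ring
      rw [e1, e2] at hfin
      exact le_of_mul_le_mul_right hfin hQpos
    have eD : P3 * (-S.γ * (P2 * (-S.γ * P1))) = S.γ^2 * (P3 * (P2 * P1)) := by ring
    rw [eD]
    exact hθP
  -- package up
  refine ⟨F, ?_, hderiv, hFs1, hFs2, hFt, hFmono, hFmem⟩
  refine ⟨List.replicate n 0 ++ [1] ++ List.replicate k 0 ++ [1] ++ List.replicate m 0, ?_⟩
  funext x
  simp only [List.foldl_append, List.foldl_cons, List.foldl_nil, foldl_rep,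
    Matrix.cons_val_zero, Matrix.cons_val_one, Matrix.head_cons]
  rfl






lemma expand {b b₃ : ℝ} (hb₃ : b₃ ∈ Ioo (0:ℝ) 1) (hb : S.f^[3] b₃ = b)
    (hbb₀ : b ≤ S.b₀) :
    ∀ N : ℕ, ∀ s t : ℝ, b₃ < s → s < t → t ≤ b → b - b₃ ≤ S.θ^N * (t - s) →
    ∃ F : ℝ → ℝ,
      (∃ w : List (Fin 2), F = fun x => (w.foldl (fun y (i : Fin 2) =>
          (![S.f, fun u => S.γ * (1-u)] i) y) x)) ∧
      (∀ x ∈ Icc s t, ∃ d : ℝ, HasDerivAt F d x ∧ S.θ ≤ d) ∧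
      F s ≤ S.f b₃ ∧ b ≤ F t ∧ (∀ x ∈ Icc s t, F x ∈ Icc (0:ℝ) 1) := by
  intro N
  induction N with
  | zero =>
    intro s t hs hst htb hN
    exfalso
    rw [pow_zero, one_mul] at hN
    have hb₃b : b₃ < b := by
      have h1 : t ≤ b := htb
      linarith
    linarith
  | succ N ih =>
    intro s t hs hst htb hN
    obtain ⟨F₁, ⟨w₁, hw₁⟩, hd₁, hFs₁, hFs₂, hFt₁, hmono₁, hmem₁⟩ :=
      S.unit hb₃ hb hbb₀ hs hst htb
    -- expansion of endpoints
    have hθ0 : (0:ℝ) < S.θ := lt_trans one_pos S.hθ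
    have key : S.θ * (t - s) ≤ F₁ t - F₁ s := by
      obtain ⟨c, hc, hc2⟩ := exists_hasDerivAt_eq_slope F₁ (deriv F₁) hst
        (fun x hx => by
          obtain ⟨d, hd, _⟩ := hd₁ x hx
          exact hd.continuousAt.continuousWithinAt)
        (fun x hx => by
          obtain ⟨d, hd, _⟩ := hd₁ x ⟨hx.1.le, hx.2.le⟩
          rw [hd.deriv]
          exact hd)
      have hcm : c ∈ Icc s t := ⟨hc.1.le, hc.2.le⟩
      obtain ⟨d, hd, hdθ⟩ := hd₁ c hcm
      have : deriv F₁ c = d := hd.deriv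
      rw [this] at hc2
      have hne : t - s ≠ 0 := sub_ne_zero.mpr hst.ne'
      rw [eq_div_iff hne] at hc2
      have h2 : S.θ * (t-s) ≤ d * (t-s) := mul_le_mul_of_nonneg_right hdθ (by linarith)
      linarith [hc2]
    have hFlt : F₁ s < F₁ t := by nlinarith [hθ0, hst]
    rcases le_or_gt b (F₁ t) with hterm | hcont
    · -- terminal
      refine ⟨F₁, ⟨w₁, hw₁⟩, hd₁, hFs₂, hterm, ?_⟩
      intro x hx
      have := hmem₁ x hx
      exact ⟨this.1.le, this.2.le⟩
    · -- recurse
      have hs' : b₃ < F₁ s := hFs₁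
      have ht' : F₁ t ≤ b := hcont.le
      have hN' : b - b₃ ≤ S.θ^N * (F₁ t - F₁ s) := by
        have h1 : S.θ^(N+1) * (t-s) = S.θ^N * (S.θ * (t-s)) := by ring
        have h2 : S.θ^N * (S.θ * (t-s)) ≤ S.θ^N * (F₁ t - F₁ s) :=
          mul_le_mul_of_nonneg_left key (pow_nonneg hθ0.le N)
        linarith [h1 ▸ hN]
      obtain ⟨F₂, ⟨w₂, hw₂⟩, hd₂, hFs₂', hFt₂', hmem₂⟩ := ih (F₁ s) (F₁ t) hs' hFlt ht' hN'
      refine ⟨F₂ ∘ F₁, ⟨w₁ ++ w₂, ?_⟩, ?_, ?_, ?_, ?_⟩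
      · funext x
        simp only [Function.comp_apply, hw₁, hw₂, List.foldl_append]
      · intro x hx
        have hxin : F₁ x ∈ Icc (F₁ s) (F₁ t) :=
          ⟨hmono₁ s x (le_refl s) hx.1 hx.2, hmono₁ x t hx.1 hx.2 (le_refl t)⟩
        obtain ⟨d1, hder1, hθ1⟩ := hd₁ x hx
        obtain ⟨d2, hder2, hθ2⟩ := hd₂ (F₁ x) hxin
        refine ⟨d2 * d1, hder2.comp x hder1, ?_⟩
        have h1 : S.θ * S.θ ≤ d2 * d1 := by
          apply mul_le_mul hθ2 hθ1 hθ0.le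
          linarith
        nlinarith [S.hθ]
      · show F₂ (F₁ s) ≤ S.f b₃
        exact hFs₂'
      · show b ≤ F₂ (F₁ t)
        exact hFt₂'
      · intro x hx
        have hxin : F₁ x ∈ Icc (F₁ s) (F₁ t) :=
          ⟨hmono₁ s x (le_refl s) hx.1 hx.2, hmono₁ x t hx.1 hx.2 (le_refl t)⟩
        exact hmem₂ (F₁ x) hxin

end Stp

set_option maxHeartbeats 3000000 in
/-- expanding return words. -/
theorem stmt8 (f₀ f₁ : ℝ → ℝ) (β₀ lam₀ γ : ℝ)
    (h0 : F0cond f₀ β₀ lam₀) (h1 : F1cond f₁ γ lam₀)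
    (h01 : F01cond f₀ β₀ lam₀ γ) :
    ∃ b₀ ∈ Set.Ioo (0:ℝ) 1, ∀ b ∈ Set.Ioc (0:ℝ) b₀,
      ∀ b₂ ∈ Set.Icc (0:ℝ) 1, f₀ (f₀ b₂) = b →
      ∀ u v : ℝ, u < v → Set.Icc u v ⊆ Set.Icc b₂ b →
      ∃ w : List (Fin 2), ∃ q ∈ Set.Icc u v,
        wordComp ![f₀, f₁] w q = q ∧
        1 < deriv (wordComp ![f₀, f₁] w) q ∧
        (∀ x ∈ Set.Icc u v, wordComp ![f₀, f₁] w x = x → x = q) ∧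
        ∀ ε > (0:ℝ), Set.Icc b₂ b ⊆
          ⋃ n : ℕ, (wordComp ![f₀, f₁] w)^[n] ''
            (Set.Icc (q - ε) (q + ε) ∩ Set.Icc 0 1) := by
  obtain ⟨hf, maps, mono, f00, f01v, fgt, dβ, hβ, dlamv, hlam0, hlam1, lamlev⟩ := h0
  obtain ⟨hf₁eq, hlg, hγ1⟩ := h1
  obtain ⟨anti, hC⟩ := h01
  have hγ0 : 0 < γ := lt_of_lt_of_le hlam0 hlg
  have hβ0 : (0:ℝ) < β₀ := by linarith
  have hinv : 0 < 1 - β₀⁻¹ := by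
    have h := inv_lt_one_of_one_lt₀ (show 1 < β₀ from hβ)
    linarith
  have hC' : 1 - β₀⁻¹ < γ * (lam₀^3 * (1 - lam₀)) := by
    have e : γ * (lam₀^3 * (1-lam₀) / (1-β₀⁻¹)) = γ * (lam₀^3 * (1-lam₀)) / (1-β₀⁻¹) := by
      ring
    rw [e, lt_div_iff₀ hinv] at hC
    linarith
  have hkey := key_poly hlam0 hlam1 hlg hγ1 hβ hC'
  have hdcont : Continuous (deriv f₀) := hf.continuous_deriv le_rfl
  -- choose r₀
  set φ : ℝ → ℝ := fun r => (1 - deriv f₀ (1-r))^2 * (deriv f₀ r - 1) with hφ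
  have hφc : Continuous φ := by
    apply Continuous.mul
    · exact (continuous_const.sub (hdcont.comp (continuous_const.sub continuous_id))).pow 2
    · exact hdcont.sub continuous_const
  have hφ0 : φ 0 = (1 - lam₀)^2 * (β₀ - 1) := by
    simp only [hφ, sub_zero, dβ, dlamv]
  have htar : (β₀-1)^3 * β₀^3 < φ 0 := by
    rw [hφ0]
    have h2 : (β₀-1) * ((β₀-1)^2 * β₀^3) < (β₀-1) * (1-lam₀)^2 :=
      mul_lt_mul_of_pos_left hkey (by linarith)
    nlinarith [h2]
  have hev1 : ∀ᶠ r in nhds (0:ℝ), (β₀-1)^3 * β₀^3 < φ r :=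
    hφc.continuousAt.eventually (eventually_gt_nhds htar)
  have hev2 : ∀ᶠ r in nhds (0:ℝ), 1 < deriv f₀ r := by
    have h : (1:ℝ) < deriv f₀ 0 := by rw [dβ]; exact hβ
    exact hdcont.continuousAt.eventually (eventually_gt_nhds h)
  have hev3 : ∀ᶠ r in nhds (0:ℝ), deriv f₀ (1-r) < 1 := by
    have hc : Continuous (fun r : ℝ => deriv f₀ (1-r)) :=
      hdcont.comp (continuous_const.sub continuous_id)
    have h : deriv f₀ (1-(0:ℝ)) < 1 := by rw [sub_zero, dlamv]; exact hlam1
    exact hc.continuousAt.eventually (eventually_lt_nhds h)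
  have hev4 : ∀ᶠ r in nhds (0:ℝ), r < 1/2 := eventually_lt_nhds (by norm_num)
  have hall : ∀ᶠ r in nhdsWithin (0:ℝ) (Set.Ioi 0),
      ((β₀-1)^3 * β₀^3 < φ r ∧ 1 < deriv f₀ r ∧ deriv f₀ (1-r) < 1 ∧ r < 1/2) ∧
        r ∈ Set.Ioi (0:ℝ) :=
    (((hev1.and (hev2.and (hev3.and hev4))).filter_mono nhdsWithin_le_nhds).and
      eventually_mem_nhdsWithin)
  obtain ⟨r₀, ⟨hφr, hρ1, hΛ1, hr12⟩, hr0pos⟩ := hall.exists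
  have hr0pos' : (0:ℝ) < r₀ := hr0pos
  -- js, j3
  obtain ⟨js, hjs⟩ := pow_unbounded_of_one_lt (lam₀⁻¹^4) hρ1
  obtain ⟨j3, hj3⟩ := pow_unbounded_of_one_lt (lam₀⁻¹^(js+1)) hρ1
  -- b₀
  set c₀ : ℝ := min (min (γ*r₀) (r₀/β₀^j3)) (γ/(2*(1+γ))) with hc₀def
  have hc₀0 : 0 < c₀ := by
    apply lt_min (lt_min (by positivity) (by positivity)) (by positivity)
  have hc₀γr : c₀ ≤ γ * r₀ := le_trans (min_le_left _ _) (min_le_left _ _)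
  have hc₀j3 : β₀^j3 * c₀ ≤ r₀ := by
    have h1 : c₀ ≤ r₀/β₀^j3 := le_trans (min_le_left _ _) (min_le_right _ _)
    rw [le_div_iff₀ (by positivity)] at h1
    linarith [h1]
  have hc₀γ2 : c₀ ≤ γ/(2*(1+γ)) := min_le_right _ _
  have hc₀γ : c₀ < γ * (1 - c₀) := by
    have h1 : c₀ * (1+γ) ≤ γ/2 := by
      have := mul_le_mul_of_nonneg_right hc₀γ2 (show (0:ℝ) ≤ 1+γ by linarith)
      calc c₀ * (1+γ) ≤ γ/(2*(1+γ)) * (1+γ) := this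
        _ = γ/2 := by field_simp
    nlinarith [hγ0, hc₀0]
  have hc₀1 : c₀ < 1 := by nlinarith [hc₀γ, hγ1, mul_pos hγ0 hc₀0]
  -- build the structure
  set S : Stp := {
    f := f₀, β := β₀, lam := lam₀, γ := γ, r₀ := r₀,
    θ := (1 - deriv f₀ (1-r₀))^2 * (deriv f₀ r₀ - 1) / ((β₀-1)^3 * β₀^3),
    b₀ := c₀, js := js, j3 := j3,
    hf := hf, maps := maps, mono := mono, f0 := f00, f1 := f01v, fgt := fgt,
    dβ := dβ, hβ := hβ, dlam := dlamv, hlam0 := hlam0, hlam1 := hlam1,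
    hlg := hlg, hγ1 := hγ1, anti := anti,
    hr0 := hr0pos', hr1 := hr12, hρgt := hρ1, hLamlt := hΛ1,
    hθle := le_refl _,
    hθ := by
      rw [lt_div_iff₀ (mul_pos (pow_pos (by linarith : (0:ℝ) < β₀ - 1) 3) (pow_pos hβ0 3)), one_mul]
      exact hφr
    hjs := hjs.le, hj3 := hj3.le,
    hb₀0 := hc₀0, hb₀1 := hc₀1, hb₀r := hc₀γr, hb₀j3 := hc₀j3, hb₀γ := hc₀γ } with hS
  refine ⟨c₀, ⟨hc₀0, hc₀1⟩, ?_⟩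
  intro b hb b₂ hb₂mem hb₂eq u v huv hsub
  have hb0 : 0 < b := hb.1
  have hbb₀ : b ≤ c₀ := hb.2
  have hb1 : b < 1 := lt_of_le_of_lt hbb₀ hc₀1
  have hb₂0 : 0 < b₂ := by
    rcases eq_or_lt_of_le hb₂mem.1 with h | h
    · exfalso
      rw [← h, f00, f00] at hb₂eq
      linarith
    · exact h
  have hfb₂mem : f₀ b₂ ∈ Set.Icc (0:ℝ) 1 := maps hb₂mem
  have hb₂b : b₂ ≤ b := by
    have h1 : b₂ ≤ f₀ b₂ := S.self_le hb₂mem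
    have h2 : f₀ b₂ ≤ f₀ (f₀ b₂) := S.self_le hfb₂mem
    rw [hb₂eq] at h2
    linarith
  have hb₂1 : b₂ < 1 := lt_of_le_of_lt hb₂b hb1
  -- find b₃
  have hsurj : b₂ ∈ f₀ '' Set.Icc (0:ℝ) 1 := by
    apply intermediate_value_Icc (by norm_num : (0:ℝ) ≤ 1) hf.continuous.continuousOn
    rw [f00, f01v]
    exact ⟨hb₂0.le, hb₂1.le⟩
  obtain ⟨b₃, hb₃mem, hb₃eq⟩ := hsurj
  have hb₃0 : 0 < b₃ := by
    rcases eq_or_lt_of_le hb₃mem.1 with h | h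
    · exfalso; rw [← h, f00] at hb₃eq; linarith
    · exact h
  have hb₃1 : b₃ < 1 := by
    rcases eq_or_lt_of_le hb₃mem.2 with h | h
    · exfalso; rw [h, f01v] at hb₃eq; linarith
    · exact h
  have hb₃Ioo : b₃ ∈ Set.Ioo (0:ℝ) 1 := ⟨hb₃0, hb₃1⟩
  have e3 : S.f^[3] b₃ = b := by
    show f₀^[3] b₃ = b
    have : f₀^[3] b₃ = f₀ (f₀ (f₀ b₃)) := by
      rw [show (3:ℕ) = 2 + 1 from rfl, Function.iterate_succ_apply',
        show (2:ℕ) = 1 + 1 from rfl, Function.iterate_succ_apply']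
      simp
    rw [this, hb₃eq, hb₂eq]
  -- interval position
  have humem : u ∈ Set.Icc b₂ b := hsub ⟨le_refl u, huv.le⟩
  have hvmem : v ∈ Set.Icc b₂ b := hsub ⟨huv.le, le_refl v⟩
  have hb₃b₂ : b₃ < b₂ := by
    have := fgt b₃ hb₃Ioo
    rw [hb₃eq] at this
    exact this
  have hb₃u : b₃ < u := lt_of_lt_of_le hb₃b₂ humem.1
  have hvb : v ≤ b := hvmem.2
  -- choose N
  have hθS : 1 < S.θ := S.hθ
  obtain ⟨N, hN⟩ := pow_unbounded_of_one_lt ((b - b₃)/(v-u)) hθS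
  have hNle : b - b₃ ≤ S.θ^N * (v - u) := by
    rw [div_lt_iff₀ (by linarith : (0:ℝ) < v - u)] at hN
    linarith
  -- apply the expansion lemma
  obtain ⟨F, ⟨w, hw⟩, hd, hFu, hFv, hmem⟩ :=
    S.expand hb₃Ioo e3 hbb₀ N u v hb₃u huv hvb hNle
  have hFu' : F u ≤ b₂ := by
    have : S.f b₃ = b₂ := hb₃eq
    rw [this] at hFu
    exact hFu
  -- identify with wordComp
  have hfeq : (fun u : ℝ => γ * (1-u)) = f₁ := funext fun x => (hf₁eq x).symm
  have hW : wordComp ![f₀, f₁] w = F := by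
    rw [← hfeq, hw]
    rfl
  -- derivative facts for covering lemma
  have hdiff : ∀ x ∈ Set.Icc u v, HasDerivAt F (deriv F x) x := by
    intro x hx
    obtain ⟨d, h1, h2⟩ := hd x hx
    rw [h1.deriv]
    exact h1
  have hder : ∀ x ∈ Set.Icc u v, S.θ ≤ deriv F x := by
    intro x hx
    obtain ⟨d, h1, h2⟩ := hd x hx
    rw [h1.deriv]
    exact h2
  obtain ⟨q, hqmem, hq, hq1, huniq, hcover⟩ :=
    expanding_cover huv hθS hdiff hder hFu' hFv humem.1 hvb hb₂0.le hb1.le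
  refine ⟨w, q, hqmem, ?_, ?_, ?_, ?_⟩
  · rw [hW]; exact hq
  · rw [hW]; exact hq1
  · intro x hx hfx
    rw [hW] at hfx
    exact huniq x hx hfx
  · intro ε hε
    rw [hW]
    exact hcover ε hε

end
end

section
/- Assume (F0), (F1) and (F2), and assume f₀'(x) ≤ β⁺ and f₂'(x) ≤ β⁺ for all x∈[0,1]. Let (p₀,p₁,p₂) be a probability vector with p₁·log γ + (p₀+p₂)·log β⁺ < 0, and let ν be the (p₀,p₁,p₂)-Bernoulli measure on Σ₃. Then for ν-almost every ξ∈Σ₃ the fiber {x∈[0,1] : (ξ,x)∈Λ_G} consists of a single point, and there is exactly one G-invariant Borel probability measure μ with π⁎μ = ν. -/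
open Set Filter MeasureTheory

noncomputable section

namespace Stmt15

def Wfun (fs : Fin 3 → ℝ → ℝ) (ξ : Sig3) : ℕ → ℝ → ℝ
  | 0 => id
  | n+1 => Wfun fs ξ n ∘ fs (ξ (-((n : ℤ) + 1)))

def Jset (fs : Fin 3 → ℝ → ℝ) (ξ : Sig3) (n : ℕ) : Set ℝ :=
  Wfun fs ξ n '' Set.Icc 0 1

variable {fs : Fin 3 → ℝ → ℝ}

lemma Wfun_mapsTo (hm : ∀ a, MapsTo (fs a) (Icc (0:ℝ) 1) (Icc 0 1)) (ξ : Sig3) :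
    ∀ n, MapsTo (Wfun fs ξ n) (Icc (0:ℝ) 1) (Icc 0 1)
  | 0 => fun x hx => hx
  | n+1 => fun x hx => Wfun_mapsTo hm ξ n (hm _ hx)

lemma Wfun_cont (hc : ∀ a, Continuous (fs a)) (ξ : Sig3) :
    ∀ n, Continuous (Wfun fs ξ n)
  | 0 => continuous_id
  | n+1 => (Wfun_cont hc ξ n).comp (hc _)

lemma Jset_nonempty (ξ : Sig3) (n : ℕ) : (Jset fs ξ n).Nonempty :=
  (Set.nonempty_Icc.2 (by norm_num)).image _

lemma Jset_compact (hc : ∀ a, Continuous (fs a)) (ξ : Sig3) (n : ℕ) :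
    IsCompact (Jset fs ξ n) :=
  (isCompact_Icc).image (Wfun_cont hc ξ n)

lemma Jset_succ_subset (hm : ∀ a, MapsTo (fs a) (Icc (0:ℝ) 1) (Icc 0 1)) (ξ : Sig3) (n : ℕ) :
    Jset fs ξ (n+1) ⊆ Jset fs ξ n := by
  rintro y ⟨x, hx, rfl⟩
  exact ⟨_, hm _ hx, rfl⟩

lemma Jset_anti (hm : ∀ a, MapsTo (fs a) (Icc (0:ℝ) 1) (Icc 0 1)) (ξ : Sig3) :
    Antitone (Jset fs ξ) :=
  antitone_nat_of_succ_le (Jset_succ_subset hm ξ)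

lemma Jset_zero (ξ : Sig3) : Jset fs ξ 0 = Icc 0 1 := by simp [Jset, Wfun]

lemma Wfun_lip {L : Fin 3 → ℝ}
    (hm : ∀ a, MapsTo (fs a) (Icc (0:ℝ) 1) (Icc 0 1))
    (hL : ∀ a, 0 < L a)
    (hlip : ∀ a, ∀ y ∈ Icc (0:ℝ) 1, ∀ z ∈ Icc (0:ℝ) 1, |fs a y - fs a z| ≤ L a * |y - z|)
    (ξ : Sig3) :
    ∀ n, ∀ y ∈ Icc (0:ℝ) 1, ∀ z ∈ Icc (0:ℝ) 1,
      |Wfun fs ξ n y - Wfun fs ξ n z| ≤ (∏ k ∈ Finset.range n, L (ξ (-((k : ℤ) + 1)))) * |y - z|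
  | 0 => by intro y _ z _; simp [Wfun]
  | n+1 => by
      intro y hy z hz
      set a := ξ (-((n : ℤ) + 1)) with ha
      have h1 := Wfun_lip hm hL hlip ξ n (fs a y) (hm a hy) (fs a z) (hm a hz)
      have h2 := hlip a y hy z hz
      calc |Wfun fs ξ (n+1) y - Wfun fs ξ (n+1) z|
          ≤ (∏ k ∈ Finset.range n, L (ξ (-((k : ℤ) + 1)))) *
              |fs (ξ (-((n : ℤ) + 1))) y - fs (ξ (-((n : ℤ) + 1))) z| := h1
        _ ≤ (∏ k ∈ Finset.range n, L (ξ (-((k : ℤ) + 1)))) *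
              (L (ξ (-((n : ℤ) + 1))) * |y - z|) := by
            refine mul_le_mul_of_nonneg_left h2 ?_
            exact Finset.prod_nonneg fun k _ => (hL _).le
        _ = (∏ k ∈ Finset.range (n+1), L (ξ (-((k : ℤ) + 1)))) * |y - z| := by
            rw [Finset.prod_range_succ]; ring

lemma shift_iter (ξ : Sig3) (n : ℕ) (i : ℤ) : (shiftMap^[n] ξ) i = ξ (i + n) := by
  induction n generalizing i with
  | zero => simp
  | succ n ih =>
      rw [Function.iterate_succ_apply']
      show shiftMap^[n] ξ (i+1) = _
      rw [ih]
      congr 1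
      push_cast
      ring

lemma Wfun_shift (ξ : Sig3) : ∀ n,
    Wfun fs (shiftMap ξ) (n+1) = fs (ξ 0) ∘ Wfun fs ξ n
  | 0 => by
      funext x
      simp [Wfun, shiftMap]
  | n+1 => by
      funext x
      have h : shiftMap ξ (-((n : ℤ) + 1 + 1)) = ξ (-((n : ℤ) + 1)) :=
        congrArg ξ (by ring)
      show (Wfun fs (shiftMap ξ) (n+1)) (fs (shiftMap ξ (-((n:ℤ)+1+1))) x) = _
      rw [h, Wfun_shift ξ n]
      simp only [Function.comp_apply]
      rfl


lemma Gmap_iter (hm : ∀ a, MapsTo (fs a) (Icc (0:ℝ) 1) (Icc 0 1)) :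
    ∀ (n : ℕ) (q : XSp),
      ((Gmap fs)^[n] q).1 = shiftMap^[n] q.1 ∧
      (((Gmap fs)^[n] q).2 : ℝ) = Wfun fs (shiftMap^[n] q.1) n (q.2 : ℝ) := by
  intro n
  induction n with
  | zero => intro q; exact ⟨rfl, rfl⟩
  | succ n ih =>
      intro q
      rw [Function.iterate_succ_apply']
      obtain ⟨h1, h2⟩ := ih q
      have hmem : Wfun fs (shiftMap^[n] q.1) n (q.2 : ℝ) ∈ Icc (0:ℝ) 1 :=
        Wfun_mapsTo hm _ n q.2.2
      constructor
      · show shiftMap ((Gmap fs)^[n] q).1 = _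
        rw [h1]
        exact (Function.iterate_succ_apply' shiftMap n q.1).symm
      · show (Set.projIcc (0:ℝ) 1 (by norm_num)
            (fs ((((Gmap fs)^[n] q).1) 0) ((((Gmap fs)^[n] q).2 : ℝ))) : ℝ) = _
        rw [h1, h2]
        have hmem2 : fs ((shiftMap^[n] q.1) 0) (Wfun fs (shiftMap^[n] q.1) n (q.2 : ℝ))
            ∈ Icc (0:ℝ) 1 := hm _ hmem
        rw [Set.projIcc_of_mem _ hmem2]
        have := Wfun_shift (fs := fs) (shiftMap^[n] q.1) n
        rw [Function.iterate_succ_apply', this]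
        rfl

lemma mem_iter_image_iff (hm : ∀ a, MapsTo (fs a) (Icc (0:ℝ) 1) (Icc 0 1))
    (ξ : Sig3) (y : Set.Icc (0:ℝ) 1) (n : ℕ) :
    (ξ, y) ∈ (Gmap fs)^[n] '' Set.univ ↔ (y : ℝ) ∈ Jset fs ξ n := by
  constructor
  · rintro ⟨q, -, hq⟩
    obtain ⟨h1, h2⟩ := Gmap_iter hm n q
    rw [hq] at h1 h2
    have h1' : ξ = shiftMap^[n] q.1 := h1
    have h2' : (y : ℝ) = Wfun fs (shiftMap^[n] q.1) n (q.2 : ℝ) := h2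
    exact ⟨(q.2 : ℝ), q.2.2, by rw [h1']; exact h2'.symm⟩
  · rintro ⟨x, hx, hxy⟩
    refine ⟨((fun j => ξ (j - n)), ⟨x, hx⟩), Set.mem_univ _, ?_⟩
    have hsh : shiftMap^[n] (fun j => ξ (j - n)) = ξ := by
      funext i
      rw [shift_iter]
      congr 1
      ring
    obtain ⟨h1, h2⟩ := Gmap_iter hm n ((fun j => ξ (j - (n:ℤ))), (⟨x, hx⟩ : Set.Icc (0:ℝ) 1))
    rw [hsh] at h1 h2
    refine Prod.ext h1 (Subtype.ext ?_)
    rw [h2]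
    show Wfun fs ξ n x = (y : ℝ)
    exact hxy

lemma mem_LamG_iff (hm : ∀ a, MapsTo (fs a) (Icc (0:ℝ) 1) (Icc 0 1))
    (ξ : Sig3) (y : Set.Icc (0:ℝ) 1) :
    (ξ, y) ∈ LamG fs ↔ ∀ n, (y : ℝ) ∈ Jset fs ξ n := by
  simp only [LamG, Set.mem_iInter]
  exact forall_congr' fun n => mem_iter_image_iff hm ξ y n

lemma iInter_Jset_nonempty (hm : ∀ a, MapsTo (fs a) (Icc (0:ℝ) 1) (Icc 0 1))
    (hc : ∀ a, Continuous (fs a)) (ξ : Sig3) :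
    (⋂ n, Jset fs ξ n).Nonempty := by
  apply IsCompact.nonempty_iInter_of_sequence_nonempty_isCompact_isClosed
  · exact Jset_succ_subset hm ξ
  · exact Jset_nonempty ξ
  · exact Jset_compact hc ξ 0
  · exact fun n => (Jset_compact hc ξ n).isClosed

instance : StandardBorelSpace (Set.Icc (0:ℝ) 1) := measurableSet_Icc.standardBorel

lemma measurable_shiftMap : Measurable shiftMap :=
  measurable_pi_lambda _ (fun i => measurable_pi_apply _)

lemma shiftMap_injective : Function.Injective shiftMap := by
  intro ξ η h
  funext i
  have := congrFun h (i - 1)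
  simpa [shiftMap] using this

lemma measurable_fs_apply (hc : ∀ a, Continuous (fs a)) (i : ℤ) :
    Measurable (fun q : Sig3 × ℝ => fs (q.1 i) q.2) := by
  have h1 : Measurable (fun r : ℝ × Fin 3 => fs r.2 r.1) :=
    measurable_from_prod_countable_left (fun a => (hc a).measurable)
  exact h1.comp ((measurable_snd).prodMk ((measurable_pi_apply i).comp measurable_fst))

lemma measurable_Wfun (hc : ∀ a, Continuous (fs a)) :
    ∀ n, Measurable (fun q : Sig3 × ℝ => Wfun fs q.1 n q.2)
  | 0 => measurable_snd
  | n+1 => by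
      have h1 : Measurable (fun q : Sig3 × ℝ => (q.1, fs (q.1 (-((n:ℤ)+1))) q.2)) :=
        measurable_fst.prodMk (measurable_fs_apply hc _)
      exact (measurable_Wfun hc n).comp h1

lemma measurable_zseq (hc : ∀ a, Continuous (fs a)) (n : ℕ) :
    Measurable (fun ξ : Sig3 => Wfun fs ξ n 0) :=
  (measurable_Wfun hc n).comp (measurable_id.prodMk measurable_const)

lemma measurable_Gmap (hc : ∀ a, Continuous (fs a)) : Measurable (Gmap fs) := by
  apply Measurable.prodMk (measurable_shiftMap.comp measurable_fst)
  exact (continuous_projIcc.measurable).comp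
    ((measurable_fs_apply hc 0).comp
      (measurable_fst.prodMk (measurable_subtype_coe.comp measurable_snd)))

lemma injective_Gmap (hm : ∀ a, MapsTo (fs a) (Icc (0:ℝ) 1) (Icc 0 1))
    (hinj : ∀ a, InjOn (fs a) (Icc (0:ℝ) 1)) : Function.Injective (Gmap fs) := by
  rintro ⟨ξ, x⟩ ⟨η, y⟩ h
  have h1 : shiftMap ξ = shiftMap η := congrArg Prod.fst h
  have hξη : ξ = η := shiftMap_injective h1
  subst hξη
  have h2 := congrArg (fun p : XSp => (p.2 : ℝ)) h
  simp only [Gmap] at h2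
  rw [Set.projIcc_of_mem _ (hm _ x.2), Set.projIcc_of_mem _ (hm _ y.2)] at h2
  have := hinj (ξ 0) x.2 y.2 h2
  simp [Prod.ext_iff, Subtype.ext_iff, this]

def Cyl (s : Finset ℤ) (a : ℤ → Fin 3) : Set Sig3 := {ξ | ∀ i ∈ s, ξ i = a i}

lemma measurableSet_Cyl (s : Finset ℤ) (a : ℤ → Fin 3) : MeasurableSet (Cyl s a) := by
  have : Cyl s a = ⋂ i ∈ s, (fun ξ : Sig3 => ξ i) ⁻¹' {a i} := by
    ext ξ; simp [Cyl]
  rw [this]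
  exact MeasurableSet.biInter (s.countable_toSet)
    (fun i _ => (measurable_pi_apply i) (measurableSet_singleton _))

lemma sig3_gen :
    (inferInstance : MeasurableSpace Sig3) =
      MeasurableSpace.generateFrom {t | ∃ s a, t = Cyl s a} := by
  refine le_antisymm ?_ (MeasurableSpace.generateFrom_le ?_)
  · show MeasurableSpace.pi ≤ _
    refine iSup_le fun i => ?_
    rintro t ⟨u, -, rfl⟩
    have : (fun ξ : Sig3 => ξ i) ⁻¹' u = ⋃ b ∈ u, Cyl {i} (fun _ => b) := by
      ext ξ; simp [Cyl]
    rw [this]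
    exact MeasurableSet.biUnion u.to_countable
      (fun b _ => MeasurableSpace.measurableSet_generateFrom ⟨{i}, fun _ => b, rfl⟩)
  · rintro t ⟨s, a, rfl⟩
    exact measurableSet_Cyl s a

lemma isPiSystem_Cyl : IsPiSystem {t : Set Sig3 | ∃ s a, t = Cyl s a} := by
  rintro _ ⟨s, a, rfl⟩ _ ⟨u, b, rfl⟩ hne
  obtain ⟨ξ0, hξ0⟩ := hne
  classical
  refine ⟨s ∪ u, fun i => if i ∈ s then a i else b i, ?_⟩
  have hab : ∀ i ∈ s, ∀ _ : i ∈ u, a i = b i := by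
    intro i hi hi'
    rw [← hξ0.1 i hi, ← hξ0.2 i hi']
  ext ξ
  simp only [Cyl, Set.mem_inter_iff, Set.mem_setOf_eq, Finset.mem_union]
  constructor
  · rintro ⟨h1, h2⟩ i hi
    by_cases his : i ∈ s
    · simp [his, h1 i his]
    · simp [his, h2 i (hi.resolve_left his)]
  · intro h
    constructor
    · intro i hi
      have := h i (Or.inl hi)
      simpa [hi] using this
    · intro i hi
      have := h i (Or.inr hi)
      by_cases his : i ∈ s
      · rw [← hab i his hi]
        simpa [his] using this
      · simpa [his] using this

variable {p : Fin 3 → ℝ} {ν : Measure Sig3}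

lemma bernoulli_shift_invariant (hν : IsBernoulli p ν) : ν.map shiftMap = ν := by
  haveI : IsProbabilityMeasure ν := hν.1
  haveI : IsProbabilityMeasure (ν.map shiftMap) :=
    Measure.isProbabilityMeasure_map measurable_shiftMap.aemeasurable
  refine ext_of_generate_finite _ sig3_gen isPiSystem_Cyl ?_ (by simp)
  rintro _ ⟨s, a, rfl⟩
  rw [Measure.map_apply measurable_shiftMap (measurableSet_Cyl s a)]
  have hpre : shiftMap ⁻¹' (Cyl s a) = Cyl (s.image (· + 1)) (fun j => a (j - 1)) := by
    ext ξ
    simp only [Cyl, Set.mem_preimage, Set.mem_setOf_eq, Finset.mem_image, shiftMap]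
    constructor
    · rintro h j ⟨i, hi, rfl⟩
      simpa using h i hi
    · intro h i hi
      simpa using h (i + 1) ⟨i, hi, rfl⟩
  rw [hpre]
  have h1 : ν (Cyl (s.image (· + 1)) (fun j => a (j - 1))) =
      ENNReal.ofReal (∏ i ∈ s.image (· + 1), p (a (i - 1))) := hν.2 _ _
  have h2 : ν (Cyl s a) = ENNReal.ofReal (∏ i ∈ s, p (a i)) := hν.2 _ _
  rw [h1, h2]
  congr 1
  rw [Finset.prod_image (by intro x _ y _ h; exact add_right_cancel h)]
  simp

lemma bernoulli_cyl_neg (hν : IsBernoulli p ν) (n : ℕ) (w : Fin n → Fin 3) :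
    ν {ξ : Sig3 | ∀ k : Fin n, ξ (-((k:ℤ)+1)) = w k} =
      ENNReal.ofReal (∏ k : Fin n, p (w k)) := by
  classical
  set e : Fin n → ℤ := fun k => -((k:ℤ)+1) with he
  have hinj : Function.Injective e := by intro x y h; simp only [he] at h; omega
  set a : ℤ → Fin 3 := fun j =>
    if h : ∃ k : Fin n, e k = j then w h.choose else 0 with ha
  have hae : ∀ k : Fin n, a (e k) = w k := by
    intro k
    have h : ∃ k' : Fin n, e k' = e k := ⟨k, rfl⟩
    have : h.choose = k := hinj h.choose_spec
    simp only [ha, dif_pos h, this]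
  have hset : {ξ : Sig3 | ∀ k : Fin n, ξ (-((k:ℤ)+1)) = w k} =
      Cyl (Finset.univ.image e) a := by
    ext ξ
    simp only [Cyl, Set.mem_setOf_eq, Finset.mem_image, Finset.mem_univ, true_and]
    constructor
    · rintro h j ⟨k, rfl⟩
      rw [hae k]; exact h k
    · intro h k
      have := h (e k) ⟨k, rfl⟩
      rwa [hae k] at this
  rw [hset]
  have h1 : ν (Cyl (Finset.univ.image e) a) =
      ENNReal.ofReal (∏ i ∈ Finset.univ.image e, p (a i)) := hν.2 _ _
  rw [h1]
  congr 1
  rw [Finset.prod_image (fun x _ y _ h => hinj h)]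
  exact Finset.prod_congr rfl (fun k _ => by rw [hae k])

def CylW (n : ℕ) (w : Fin n → Fin 3) : Set Sig3 :=
  {ξ : Sig3 | ∀ k : Fin n, ξ (-((k:ℤ)+1)) = w k}

lemma measurableSet_CylW (n : ℕ) (w : Fin n → Fin 3) : MeasurableSet (CylW n w) := by
  have : CylW n w = ⋂ k : Fin n, (fun ξ : Sig3 => ξ (-((k:ℤ)+1))) ⁻¹' {w k} := by
    ext ξ; simp [CylW]
  rw [this]
  exact MeasurableSet.iInter fun k => (measurable_pi_apply _) (measurableSet_singleton _)

lemma prod_decomp (g : Fin 3 → ℝ) (n : ℕ) (ξ : Sig3) :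
    (∏ k : Fin n, g (ξ (-((k:ℤ)+1)))) =
      ∑ w : Fin n → Fin 3,
        Set.indicator (CylW n w) (fun _ => ∏ k : Fin n, g (w k)) ξ := by
  classical
  set w0 : Fin n → Fin 3 := fun k => ξ (-((k:ℤ)+1)) with hw0
  rw [Finset.sum_eq_single w0]
  · rw [Set.indicator_of_mem (by intro k; rfl : ξ ∈ CylW n w0)]
  · intro w _ hw
    rw [Set.indicator_of_notMem]
    intro hmem
    exact hw (funext fun k => (hmem k).symm)
  · intro h
    exact absurd (Finset.mem_univ w0) h

lemma integral_prod_word {p : Fin 3 → ℝ} {ν : Measure Sig3}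
    (hν : IsBernoulli p ν) (hp : ∀ a, 0 ≤ p a) (g : Fin 3 → ℝ) (n : ℕ) :
    ∫ ξ, (∏ k : Fin n, g (ξ (-((k:ℤ)+1)))) ∂ν = (∑ a : Fin 3, g a * p a) ^ n := by
  classical
  haveI : IsProbabilityMeasure ν := hν.1
  have hint : ∀ w : Fin n → Fin 3,
      Integrable (Set.indicator (CylW n w) (fun _ => ∏ k : Fin n, g (w k))) ν :=
    fun w => (integrable_const _).indicator (measurableSet_CylW n w)
  have h1 : ∫ ξ, (∏ k : Fin n, g (ξ (-((k:ℤ)+1)))) ∂ν =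
      ∑ w : Fin n → Fin 3, ∫ ξ,
        Set.indicator (CylW n w) (fun _ => ∏ k : Fin n, g (w k)) ξ ∂ν := by
    rw [← integral_finset_sum _ (fun w _ => hint w)]
    exact integral_congr_ae (Eventually.of_forall fun ξ => prod_decomp g n ξ)
  rw [h1]
  have h2 : ∀ w : Fin n → Fin 3, ∫ ξ,
      Set.indicator (CylW n w) (fun _ => ∏ k : Fin n, g (w k)) ξ ∂ν =
      (∏ k : Fin n, g (w k)) * (∏ k : Fin n, p (w k)) := by
    intro w
    rw [integral_indicator_const _ (measurableSet_CylW n w)]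
    have : ν (CylW n w) = ENNReal.ofReal (∏ k : Fin n, p (w k)) := bernoulli_cyl_neg hν n w
    rw [measureReal_def, this, smul_eq_mul, ENNReal.toReal_ofReal (Finset.prod_nonneg fun k _ => hp _)]
    ring
  rw [Finset.sum_congr rfl (fun w _ => h2 w)]
  have h3 : (∑ a : Fin 3, g a * p a) ^ n = ∏ _k : Fin n, (∑ a : Fin 3, g a * p a) := by
    rw [Finset.prod_const]; simp
  rw [h3, Finset.prod_univ_sum (fun _ => (Finset.univ : Finset (Fin 3)))
    (fun _ a => g a * p a), Fintype.piFinset_univ]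
  refine Finset.sum_congr rfl (fun w _ => ?_)
  rw [← Finset.prod_mul_distrib]

lemma ae_good {L : Fin 3 → ℝ} {p : Fin 3 → ℝ} {ν : Measure Sig3} {t : ℝ}
    (hm : ∀ a, MapsTo (fs a) (Icc (0:ℝ) 1) (Icc 0 1))
    (hL : ∀ a, 0 < L a)
    (hlip : ∀ a, ∀ y ∈ Icc (0:ℝ) 1, ∀ z ∈ Icc (0:ℝ) 1, |fs a y - fs a z| ≤ L a * |y - z|)
    (hp : ∀ a, 0 ≤ p a) (hν : IsBernoulli p ν)
    (ht : 0 < t) (hρ : (∑ a : Fin 3, (L a) ^ t * p a) < 1) :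
    ∀ᵐ ξ ∂ν, ∀ ε > (0:ℝ), ∃ n, ∀ y ∈ Jset fs ξ n, ∀ z ∈ Jset fs ξ n, |y - z| ≤ ε := by
  haveI : IsProbabilityMeasure ν := hν.1
  set ρ : ℝ := ∑ a : Fin 3, (L a) ^ t * p a with hρdef
  have hρ0 : 0 ≤ ρ := Finset.sum_nonneg fun a _ =>
    mul_nonneg (Real.rpow_nonneg (hL a).le t) (hp a)
  -- the product bound function
  set F : ℕ → Sig3 → ℝ := fun n ξ => ∏ k : Fin n, (L (ξ (-((k:ℤ)+1)))) ^ t with hF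
  have hFnonneg : ∀ n ξ, 0 ≤ F n ξ := fun n ξ =>
    Finset.prod_nonneg fun k _ => Real.rpow_nonneg (hL _).le t
  have hFmeas : ∀ n, Measurable (F n) := by
    intro n
    apply Finset.measurable_prod
    intro k _
    exact (measurable_of_countable (fun a : Fin 3 => (L a) ^ t)).comp (measurable_pi_apply _)
  have hFint : ∀ n, Integrable (F n) ν := by
    intro n
    have : F n = fun ξ => ∑ w : Fin n → Fin 3,
        Set.indicator (CylW n w) (fun _ => ∏ k : Fin n, (L (w k)) ^ t) ξ :=
      funext fun ξ => prod_decomp (fun a => (L a) ^ t) n ξ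
    rw [this]
    exact integrable_finset_sum _ fun w _ =>
      (integrable_const _).indicator (measurableSet_CylW n w)
  have hFi : ∀ n, ∫ ξ, F n ξ ∂ν = ρ ^ n := fun n =>
    integral_prod_word hν hp (fun a => (L a) ^ t) n
  -- Markov bound
  have hmarkov : ∀ (n : ℕ) (ε : ℝ), 0 < ε →
      (ν {ξ | ε ^ t ≤ F n ξ}).toReal ≤ ρ ^ n / ε ^ t := by
    intro n ε hε
    have hεt : 0 < ε ^ t := Real.rpow_pos_of_pos hε t
    have := mul_meas_ge_le_integral_of_nonneg
      (Eventually.of_forall (hFnonneg n)) (hFint n) (ε ^ t)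
    rw [hFi n] at this
    rw [div_eq_inv_mul, ← mul_le_mul_iff_right₀ hεt, ← mul_assoc, mul_inv_cancel₀ hεt.ne', one_mul]
    exact this
  -- the diameter bad sets are null
  have hT : ∀ ε : ℝ, 0 < ε →
      ν {ξ | ∀ n, ∃ y ∈ Jset fs ξ n, ∃ z ∈ Jset fs ξ n, ε ≤ |y - z|} = 0 := by
    intro ε hε
    set T := {ξ | ∀ n, ∃ y ∈ Jset fs ξ n, ∃ z ∈ Jset fs ξ n, ε ≤ |y - z|} with hTdef
    have hsub : ∀ n, T ⊆ {ξ | ε ^ t ≤ F n ξ} := by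
      intro n ξ hξ
      obtain ⟨y, ⟨u, hu, rfl⟩, z, ⟨v, hv, rfl⟩, hyz⟩ := hξ n
      have hb := Wfun_lip hm hL hlip ξ n u hu v hv
      have huv : |u - v| ≤ 1 := by
        rw [abs_sub_le_iff]
        constructor <;> nlinarith [hu.1, hu.2, hv.1, hv.2]
      have hP0 : (0:ℝ) ≤ ∏ k ∈ Finset.range n, L (ξ (-((k:ℤ)+1))) :=
        Finset.prod_nonneg fun k _ => (hL _).le
      have hεP : ε ≤ ∏ k ∈ Finset.range n, L (ξ (-((k:ℤ)+1))) := by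
        calc ε ≤ |Wfun fs ξ n u - Wfun fs ξ n v| := hyz
          _ ≤ (∏ k ∈ Finset.range n, L (ξ (-((k:ℤ)+1)))) * |u - v| := hb
          _ ≤ (∏ k ∈ Finset.range n, L (ξ (-((k:ℤ)+1)))) * 1 :=
              mul_le_mul_of_nonneg_left huv hP0
          _ = _ := mul_one _
      have : ε ^ t ≤ (∏ k ∈ Finset.range n, L (ξ (-((k:ℤ)+1)))) ^ t :=
        Real.rpow_le_rpow hε.le hεP ht.le
      refine le_trans this ?_
      rw [← Real.finset_prod_rpow _ _ (fun k _ => (hL _).le) t]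
      rw [show (∏ k ∈ Finset.range n, L (ξ (-((k:ℤ)+1))) ^ t)
            = ∏ k : Fin n, L (ξ (-((k:ℤ)+1))) ^ t from
        (Fin.prod_univ_eq_prod_range (fun k => L (ξ (-((k:ℤ)+1))) ^ t) n).symm]
    have hle : ∀ n, (ν T).toReal ≤ ρ ^ n / ε ^ t := by
      intro n
      refine le_trans ?_ (hmarkov n ε hε)
      exact ENNReal.toReal_mono (measure_ne_top ν _) (measure_mono (hsub n))
    have hlim : Tendsto (fun n : ℕ => ρ ^ n / ε ^ t) atTop (nhds 0) := by
      rw [show (0:ℝ) = 0 / ε ^ t by simp]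
      exact (tendsto_pow_atTop_nhds_zero_of_lt_one hρ0 hρ).div_const _
    have h0 : (ν T).toReal ≤ 0 :=
      ge_of_tendsto hlim (Eventually.of_forall hle)
    have := le_antisymm h0 ENNReal.toReal_nonneg
    rwa [ENNReal.toReal_eq_zero_iff, or_iff_left (measure_ne_top ν T)] at this
  -- conclude
  rw [ae_iff]
  refine measure_mono_null ?_
    (measure_iUnion_null (fun m : ℕ =>
      hT (1 / (m + 1)) (by positivity)))
  intro ξ hξ
  simp only [Set.mem_setOf_eq] at hξ
  push_neg at hξ
  obtain ⟨ε, hε, hbad⟩ := hξ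
  obtain ⟨m, hm'⟩ := exists_nat_one_div_lt hε
  refine Set.mem_iUnion.2 ⟨m, fun n => ?_⟩
  obtain ⟨y, hy, z, hz, hyz⟩ := hbad n
  exact ⟨y, hy, z, hz, le_trans hm'.le hyz.le⟩

def Good (fs : Fin 3 → ℝ → ℝ) (ξ : Sig3) : Prop :=
  ∀ ε > (0:ℝ), ∃ n, ∀ y ∈ Jset fs ξ n, ∀ z ∈ Jset fs ξ n, |y - z| ≤ ε

lemma good_subsingleton (hg : Good fs ξ) :
    ∀ y ∈ ⋂ n, Jset fs ξ n, ∀ z ∈ ⋂ n, Jset fs ξ n, y = z := by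
  intro y hy z hz
  by_contra hne
  have habs : 0 < |y - z| := abs_pos.2 (sub_ne_zero.2 hne)
  obtain ⟨n, hn⟩ := hg (|y - z| / 2) (by linarith)
  have := hn y (Set.mem_iInter.1 hy n) z (Set.mem_iInter.1 hz n)
  linarith

lemma good_singleton (hm : ∀ a, MapsTo (fs a) (Icc (0:ℝ) 1) (Icc 0 1))
    (hc : ∀ a, Continuous (fs a)) (hg : Good fs ξ) :
    ∃ x0 ∈ Icc (0:ℝ) 1, (⋂ n, Jset fs ξ n) = {x0} := by
  obtain ⟨x0, hx0⟩ := iInter_Jset_nonempty hm hc ξ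
  have hx0I : x0 ∈ Icc (0:ℝ) 1 := by
    have := Set.mem_iInter.1 hx0 0
    rwa [Jset_zero] at this
  refine ⟨x0, hx0I, ?_⟩
  ext y
  constructor
  · intro hy
    exact good_subsingleton hg y hy x0 hx0
  · rintro rfl
    exact hx0

lemma zseq_mem (hm : ∀ a, MapsTo (fs a) (Icc (0:ℝ) 1) (Icc 0 1)) (ξ : Sig3)
    {n m : ℕ} (hnm : n ≤ m) : Wfun fs ξ m 0 ∈ Jset fs ξ n :=
  Jset_anti hm ξ hnm ⟨0, by norm_num, rfl⟩

lemma good_cauchy (hm : ∀ a, MapsTo (fs a) (Icc (0:ℝ) 1) (Icc 0 1))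
    (hg : Good fs ξ) :
    ∃ l : ℝ, Tendsto (fun n => Wfun fs ξ n 0) atTop (nhds l) := by
  apply cauchySeq_tendsto_of_complete
  rw [Metric.cauchySeq_iff']
  intro ε hε
  obtain ⟨N, hN⟩ := hg (ε / 2) (by linarith)
  refine ⟨N, fun n hn => ?_⟩
  have h1 : Wfun fs ξ n 0 ∈ Jset fs ξ N := zseq_mem hm ξ hn
  have h2 : Wfun fs ξ N 0 ∈ Jset fs ξ N := zseq_mem hm ξ le_rfl
  have := hN _ h1 _ h2
  rw [Real.dist_eq]
  linarith

lemma tendsto_mem_iInter (hm : ∀ a, MapsTo (fs a) (Icc (0:ℝ) 1) (Icc 0 1))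
    (hc : ∀ a, Continuous (fs a)) {ξ : Sig3} {l : ℝ}
    (hl : Tendsto (fun n => Wfun fs ξ n 0) atTop (nhds l)) :
    l ∈ ⋂ n, Jset fs ξ n := by
  refine Set.mem_iInter.2 fun n => ?_
  have hclosed : IsClosed (Jset fs ξ n) := (Jset_compact hc ξ n).isClosed
  refine hclosed.mem_of_tendsto (hl.comp (tendsto_add_atTop_nat n)) ?_
  exact Eventually.of_forall fun m => zseq_mem hm ξ (Nat.le_add_left n m)

theorem main_abstract {L p : Fin 3 → ℝ} {ν : Measure Sig3} {t : ℝ}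
    (hm : ∀ a, MapsTo (fs a) (Icc (0:ℝ) 1) (Icc 0 1))
    (hc : ∀ a, Continuous (fs a))
    (hinj : ∀ a, InjOn (fs a) (Icc (0:ℝ) 1))
    (hL : ∀ a, 0 < L a)
    (hlip : ∀ a, ∀ y ∈ Icc (0:ℝ) 1, ∀ z ∈ Icc (0:ℝ) 1, |fs a y - fs a z| ≤ L a * |y - z|)
    (hp : ∀ a, 0 ≤ p a) (hν : IsBernoulli p ν) (ht : 0 < t)
    (hρ : (∑ a : Fin 3, (L a) ^ t * p a) < 1) :
    (∀ᵐ ξ ∂ν, ∃ x : Set.Icc (0:ℝ) 1, {y : Set.Icc (0:ℝ) 1 | (ξ, y) ∈ LamG fs} = {x}) ∧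
    (∃! μ : Measure XSp, IsProbabilityMeasure μ ∧ μ.map (Gmap fs) = μ ∧
        μ.map Prod.fst = ν) := by
  haveI : IsProbabilityMeasure ν := hν.1
  have hgood : ∀ᵐ ξ ∂ν, Good fs ξ := ae_good hm hL hlip hp hν ht hρ
  obtain ⟨xsel, hxsel_meas, hxsel_tendsto⟩ :=
    measurable_limit_of_tendsto_metrizable_ae (μ := ν) (L := atTop)
      (f := fun n (ξ : Sig3) => Wfun fs ξ n 0)
      (fun n => (measurable_zseq hc n).aemeasurable)
      (hgood.mono fun ξ hg => good_cauchy hm hg)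
  set E : Set Sig3 :=
    {ξ | Good fs ξ ∧ Tendsto (fun n => Wfun fs ξ n 0) atTop (nhds (xsel ξ))} with hEdef
  have hEae : ∀ᵐ ξ ∂ν, ξ ∈ E := by
    filter_upwards [hgood, hxsel_tendsto] with ξ h1 h2
    exact ⟨h1, h2⟩
  have hE : ν Eᶜ = 0 := ae_iff.mp hEae
  set M := toMeasurable ν Eᶜ with hMdef
  have hMmeas : MeasurableSet M := measurableSet_toMeasurable ν Eᶜ
  have hM0 : ν M = 0 := by rw [hMdef, measure_toMeasurable]; exact hE
  have hEM : ∀ ξ, ξ ∉ M → ξ ∈ E := by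
    intro ξ h
    by_contra h'
    exact h (subset_toMeasurable ν Eᶜ h')
  have hkey : ∀ ξ ∈ E, xsel ξ ∈ (⋂ n, Jset fs ξ n) ∧ xsel ξ ∈ Icc (0:ℝ) 1 ∧
      (⋂ n, Jset fs ξ n) = {xsel ξ} := by
    intro ξ hξ
    have h1 : xsel ξ ∈ ⋂ n, Jset fs ξ n := tendsto_mem_iInter hm hc hξ.2
    obtain ⟨x0, hx0I, hx0⟩ := good_singleton hm hc hξ.1
    have hxx : xsel ξ = x0 := by rw [hx0] at h1; exact h1
    exact ⟨h1, hxx ▸ hx0I, by rw [hx0, hxx]⟩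
  -- part 1
  have part1 : ∀ᵐ ξ ∂ν, ∃ x : Set.Icc (0:ℝ) 1,
      {y : Set.Icc (0:ℝ) 1 | (ξ, y) ∈ LamG fs} = {x} := by
    refine hEae.mono ?_
    intro ξ hξ
    obtain ⟨h1, hI, hsingle⟩ := hkey ξ hξ
    refine ⟨⟨xsel ξ, hI⟩, ?_⟩
    ext y
    simp only [Set.mem_setOf_eq, Set.mem_singleton_iff]
    rw [mem_LamG_iff hm]
    constructor
    · intro h
      have hy : (y:ℝ) ∈ ⋂ n, Jset fs ξ n := Set.mem_iInter.2 h
      rw [hsingle] at hy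
      exact Subtype.ext hy
    · rintro rfl
      exact fun n => Set.mem_iInter.1 h1 n
  -- the graph map
  set g : Sig3 → XSp := fun ξ => (ξ, Set.projIcc 0 1 (by norm_num) (xsel ξ)) with hgdef
  have hgmeas : Measurable g :=
    measurable_id.prodMk (continuous_projIcc.measurable.comp hxsel_meas)
  have hGmeas : Measurable (Gmap fs) := measurable_Gmap hc
  have hGinj : Function.Injective (Gmap fs) := injective_Gmap hm hinj
  have hσ : ν.map shiftMap = ν := bernoulli_shift_invariant hν
  have hMpre : ν (shiftMap ⁻¹' M) = 0 := by
    rw [← Measure.map_apply measurable_shiftMap hMmeas, hσ]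
    exact hM0
  have hequiv : (fun ξ => Gmap fs (g ξ)) =ᵐ[ν] (fun ξ => g (shiftMap ξ)) := by
    have h1 : ∀ᵐ ξ ∂ν, ξ ∉ M := by
      rw [ae_iff]
      simpa using hM0
    have h2 : ∀ᵐ ξ ∂ν, shiftMap ξ ∉ M := by
      rw [ae_iff]
      simp only [not_not]; exact hMpre
    filter_upwards [h1, h2] with ξ hξ hsξ
    obtain ⟨hx1, hxI, hxs⟩ := hkey ξ (hEM ξ hξ)
    obtain ⟨hy1, hyI, hys⟩ := hkey _ (hEM _ hsξ)
    have himg : fs (ξ 0) (xsel ξ) ∈ ⋂ n, Jset fs (shiftMap ξ) n := by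
      refine Set.mem_iInter.2 fun n => ?_
      obtain ⟨u, hu, huw⟩ := Set.mem_iInter.1 hx1 n
      have hmem : fs (ξ 0) (Wfun fs ξ n u) ∈ Jset fs (shiftMap ξ) (n+1) := by
        refine ⟨u, hu, ?_⟩
        rw [Wfun_shift ξ n]
        rfl
      rw [huw] at hmem
      exact Jset_anti hm (shiftMap ξ) (Nat.le_succ n) hmem
    have heq : fs (ξ 0) (xsel ξ) = xsel (shiftMap ξ) := by
      rw [hys] at himg
      exact himg
    show Gmap fs (ξ, Set.projIcc 0 1 (by norm_num) (xsel ξ)) = _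
    unfold Gmap
    refine Prod.ext rfl ?_
    show Set.projIcc 0 1 (by norm_num)
        (fs (ξ 0) ((Set.projIcc 0 1 (by norm_num) (xsel ξ) : Set.Icc (0:ℝ) 1) : ℝ)) = _
    rw [Set.projIcc_of_mem _ hxI]
    show Set.projIcc 0 1 (by norm_num) (fs (ξ 0) (xsel ξ)) = _
    rw [heq]
  have hinv : (ν.map g).map (Gmap fs) = ν.map g := by
    rw [Measure.map_map hGmeas hgmeas]
    have e1 : ν.map (Gmap fs ∘ g) = ν.map (fun ξ => g (shiftMap ξ)) :=
      Measure.map_congr hequiv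
    rw [e1, show (fun ξ => g (shiftMap ξ)) = g ∘ shiftMap from rfl,
      ← Measure.map_map hgmeas measurable_shiftMap, hσ]
  have hproj : (ν.map g).map Prod.fst = ν := by
    rw [Measure.map_map measurable_fst hgmeas]
    have : (Prod.fst ∘ g) = id := rfl
    rw [this, Measure.map_id]
  haveI : IsProbabilityMeasure (ν.map g) := Measure.isProbabilityMeasure_map hgmeas.aemeasurable
  refine ⟨part1, ν.map g, ⟨inferInstance, hinv, hproj⟩, ?_⟩
  rintro μ' ⟨hμ'prob, hμ'inv, hμ'proj⟩
  haveI := hμ'prob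
  have hemb : MeasurableEmbedding (Gmap fs) := hGmeas.measurableEmbedding hGinj
  have hembn : ∀ n : ℕ, MeasurableEmbedding ((Gmap fs)^[n]) := by
    intro n
    induction n with
    | zero => exact MeasurableEmbedding.id
    | succ n ih =>
        rw [Function.iterate_succ']
        exact hemb.comp ih
  have himage1 : ∀ n : ℕ, μ' ((Gmap fs)^[n] '' Set.univ) = 1 := by
    intro n
    induction n with
    | zero => simpa using measure_univ
    | succ n ih =>
        have hmeasA : MeasurableSet ((Gmap fs)^[n] '' Set.univ) :=
          (hembn n).measurableSet_image.2 MeasurableSet.univ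
        have himg : (Gmap fs)^[n+1] '' Set.univ =
            Gmap fs '' ((Gmap fs)^[n] '' Set.univ) := by
          rw [Function.iterate_succ', Set.image_comp]
        rw [himg]
        have hmeasGA : MeasurableSet (Gmap fs '' ((Gmap fs)^[n] '' Set.univ)) :=
          hemb.measurableSet_image.2 hmeasA
        calc μ' (Gmap fs '' ((Gmap fs)^[n] '' Set.univ))
            = (μ'.map (Gmap fs)) (Gmap fs '' ((Gmap fs)^[n] '' Set.univ)) := by rw [hμ'inv]
          _ = μ' ((Gmap fs) ⁻¹' (Gmap fs '' ((Gmap fs)^[n] '' Set.univ))) :=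
              Measure.map_apply hGmeas hmeasGA
          _ = μ' ((Gmap fs)^[n] '' Set.univ) := by
              rw [Function.Injective.preimage_image hGinj]
          _ = 1 := ih
  have hLamae : ∀ᵐ q ∂μ', q ∈ LamG fs := by
    have hall : ∀ᵐ q ∂μ', ∀ n : ℕ, q ∈ (Gmap fs)^[n] '' Set.univ := by
      rw [ae_all_iff]
      intro n
      have hmeasA : MeasurableSet ((Gmap fs)^[n] '' Set.univ) :=
        (hembn n).measurableSet_image.2 MeasurableSet.univ
      have hc0 : μ' (((Gmap fs)^[n] '' Set.univ)ᶜ) = 0 := by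
        rw [measure_compl hmeasA (measure_ne_top μ' _), himage1 n, measure_univ, tsub_self]
      rw [ae_iff]
      exact hc0
    exact hall.mono fun q hq => Set.mem_iInter.2 hq
  have hMq : ∀ᵐ q ∂μ', q.1 ∉ M := by
    have h0 : μ' (Prod.fst ⁻¹' M) = 0 := by
      rw [← Measure.map_apply measurable_fst hMmeas, hμ'proj]
      exact hM0
    rw [ae_iff]
    simp only [not_not]; exact h0
  have hgraph : ∀ᵐ q ∂μ', q = g q.1 := by
    filter_upwards [hLamae, hMq] with q hqLam hqM
    obtain ⟨hx1, hxI, hxs⟩ := hkey _ (hEM _ hqM)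
    have hq2 : (q.2 : ℝ) ∈ ⋂ n, Jset fs q.1 n := by
      refine Set.mem_iInter.2 ?_
      have hq' : (q.1, q.2) ∈ LamG fs := by
        rw [Prod.mk.eta]
        exact hqLam
      exact (mem_LamG_iff hm q.1 q.2).1 hq'
    rw [hxs] at hq2
    refine Prod.ext rfl ?_
    show q.2 = Set.projIcc 0 1 (by norm_num) (xsel q.1)
    rw [Set.projIcc_of_mem _ hxI]
    exact Subtype.ext hq2
  refine Measure.ext fun A hA => ?_
  have hAg : μ' A = μ' (Prod.fst ⁻¹' (g ⁻¹' A)) := by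
    apply measure_congr
    rw [Filter.eventuallyEq_set]
    filter_upwards [hgraph] with q hq
    rw [Set.mem_preimage, Set.mem_preimage, ← hq]
  rw [hAg, ← Measure.map_apply measurable_fst (hgmeas hA), hμ'proj,
    ← Measure.map_apply hgmeas hA]

lemma lip_of_deriv {f : ℝ → ℝ} {C : ℝ} (hf : ContDiff ℝ 1 f)
    (hC : ∀ x ∈ Icc (0:ℝ) 1, |deriv f x| ≤ C) :
    ∀ y ∈ Icc (0:ℝ) 1, ∀ z ∈ Icc (0:ℝ) 1, |f y - f z| ≤ C * |y - z| := by
  intro y hy z hz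
  have hder : ∀ x ∈ Icc (0:ℝ) 1, HasDerivWithinAt f (deriv f x) (Icc 0 1) x := fun x _ =>
    ((hf.differentiable one_ne_zero) x).hasDerivAt.hasDerivWithinAt
  have hnorm : ∀ x ∈ Icc (0:ℝ) 1, ‖deriv f x‖ ≤ C := fun x hx => by
    rw [Real.norm_eq_abs]; exact hC x hx
  have := (convex_Icc (0:ℝ) 1).norm_image_sub_le_of_norm_hasDerivWithin_le hder hnorm hz hy
  simpa [Real.norm_eq_abs] using this

lemma exists_t {γ β p0 p1 p2 : ℝ} (hγ0 : 0 < γ) (hβ0 : 0 < β)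
    (hsum : p0 + p1 + p2 = 1)
    (hneg : p1 * Real.log γ + (p0 + p2) * Real.log β < 0) :
    ∃ t : ℝ, 0 < t ∧ β ^ t * p0 + γ ^ t * p1 + β ^ t * p2 < 1 := by
  set φ : ℝ → ℝ := fun t => p1 * γ ^ t + (p0 + p2) * β ^ t with hφdef
  have hφ0 : φ 0 = 1 := by
    simp only [hφdef, Real.rpow_zero, mul_one]
    linarith
  have hd : HasDerivAt φ
      (p1 * (γ ^ (0:ℝ) * Real.log γ) + (p0 + p2) * (β ^ (0:ℝ) * Real.log β)) 0 :=
    (((Real.hasStrictDerivAt_const_rpow hγ0 0).hasDerivAt).const_mul p1).add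
      (((Real.hasStrictDerivAt_const_rpow hβ0 0).hasDerivAt).const_mul (p0 + p2))
  have hdval : HasDerivAt φ (p1 * Real.log γ + (p0 + p2) * Real.log β) 0 := by
    simpa [Real.rpow_zero] using hd
  rw [hasDerivAt_iff_tendsto_slope] at hdval
  have hmono : nhdsWithin (0:ℝ) (Set.Ioi 0) ≤ nhdsWithin (0:ℝ) {(0:ℝ)}ᶜ :=
    nhdsWithin_mono _ (fun x hx => ne_of_gt hx)
  have hslope := hdval.mono_left hmono
  have hev : ∀ᶠ t in nhdsWithin (0:ℝ) (Set.Ioi 0), slope φ 0 t < 0 :=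
    hslope.eventually_lt_const hneg
  have hmem : ∀ᶠ t in nhdsWithin (0:ℝ) (Set.Ioi 0), t ∈ Set.Ioi (0:ℝ) :=
    eventually_mem_nhdsWithin
  obtain ⟨t, hts, htpos⟩ := (hev.and hmem).exists
  refine ⟨t, htpos, ?_⟩
  rw [slope_def_field] at hts
  have ht0 : (0:ℝ) < t := htpos
  have hlt : φ t - φ 0 < 0 := by
    by_contra hge
    push_neg at hge
    have : 0 ≤ (φ t - φ 0) / (t - 0) := div_nonneg hge (by linarith)
    linarith
  rw [hφ0] at hlt
  have : φ t < 1 := by linarith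
  calc β ^ t * p0 + γ ^ t * p1 + β ^ t * p2 = φ t := by rw [hφdef]; ring
    _ < 1 := this

end Stmt15

/-- if the upper bound on the central exponent is negative then
`ν`-almost every fiber of `Λ_G` is a single point and the invariant lift is unique. -/
theorem stmt15 (f₀ f₁ f₂ : ℝ → ℝ) (β₀ lam₀ γ β₂ : ℝ)
    (h0 : F0cond f₀ β₀ lam₀) (h1 : F1cond f₁ γ lam₀) (h2 : F2cond f₂ β₂ lam₀)
    (hd : ∀ x ∈ Set.Icc (0:ℝ) 1, deriv f₀ x ≤ max β₀ β₂ ∧ deriv f₂ x ≤ max β₀ β₂)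
    (p₀ p₁ p₂ : ℝ) (hp0 : 0 ≤ p₀) (hp1 : 0 ≤ p₁) (hp2 : 0 ≤ p₂)
    (hsum : p₀ + p₁ + p₂ = 1)
    (hneg : p₁ * Real.log γ + (p₀ + p₂) * Real.log (max β₀ β₂) < 0)
    (ν : Measure Sig3) (hν : IsBernoulli ![p₀, p₁, p₂] ν) :
    (∀ᵐ ξ ∂ν, ∃ x : Set.Icc (0:ℝ) 1,
        {y : Set.Icc (0:ℝ) 1 | (ξ, y) ∈ LamG ![f₀, f₁, f₂]} = {x}) ∧
    (∃! μ : Measure XSp, IsProbabilityMeasure μ ∧ μ.map (Gmap ![f₀, f₁, f₂]) = μ ∧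
        μ.map Prod.fst = ν) := by
  classical
  obtain ⟨hC0, hm0, hmono0, h00, h01, hgt0, hd00, hβ0, hd01, hlam0, hlam1, hlamle0⟩ := h0
  obtain ⟨hf1, hγlam, hγ1⟩ := h1
  obtain ⟨hC2, hm2, hmono2, h20, hd20, hβ2, hlamle2, -⟩ := h2
  have hβ1 : 1 < max β₀ β₂ := lt_max_of_lt_left hβ0
  have hγ0 : 0 < γ := lt_of_lt_of_le hlam0 hγlam
  have hf1' : f₁ = fun x => γ * (1 - x) := funext hf1
  have hm1 : MapsTo f₁ (Icc (0:ℝ) 1) (Icc 0 1) := by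
    intro x hx
    rw [hf1']
    constructor
    · show (0:ℝ) ≤ γ * (1 - x)
      exact mul_nonneg hγ0.le (by linarith [hx.2])
    · show γ * (1 - x) ≤ 1
      nlinarith [hx.1, hx.2, mul_nonneg hγ0.le hx.1]
  have hm : ∀ a, MapsTo ((![f₀, f₁, f₂] : Fin 3 → ℝ → ℝ) a) (Icc (0:ℝ) 1) (Icc 0 1) := by
    intro a
    fin_cases a
    · exact hm0
    · exact hm1
    · exact hm2
  have hc : ∀ a, Continuous ((![f₀, f₁, f₂] : Fin 3 → ℝ → ℝ) a) := by
    intro a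
    fin_cases a
    · exact hC0.continuous
    · show Continuous f₁
      rw [hf1']
      exact continuous_const.mul (continuous_const.sub continuous_id)
    · exact hC2.continuous
  have hinj1 : InjOn f₁ (Icc (0:ℝ) 1) := by
    intro a _ b _ hab
    rw [hf1'] at hab
    have h' : 1 - a = 1 - b := mul_left_cancel₀ hγ0.ne' hab
    linarith
  have hinj : ∀ a, InjOn ((![f₀, f₁, f₂] : Fin 3 → ℝ → ℝ) a) (Icc (0:ℝ) 1) := by
    intro a
    fin_cases a
    · exact hmono0.injOn
    · exact hinj1
    · exact hmono2.injOn
  have habs0 : ∀ x ∈ Icc (0:ℝ) 1, |deriv f₀ x| ≤ max β₀ β₂ := fun x hx => by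
    rw [abs_of_pos (lt_of_lt_of_le hlam0 (hlamle0 x hx))]
    exact (hd x hx).1
  have habs2 : ∀ x ∈ Icc (0:ℝ) 1, |deriv f₂ x| ≤ max β₀ β₂ := fun x hx => by
    rw [abs_of_pos (lt_of_lt_of_le hlam0 (hlamle2 x hx))]
    exact (hd x hx).2
  have hlip0 := Stmt15.lip_of_deriv hC0 habs0
  have hlip2 := Stmt15.lip_of_deriv hC2 habs2
  have hlip1 : ∀ y ∈ Icc (0:ℝ) 1, ∀ z ∈ Icc (0:ℝ) 1, |f₁ y - f₁ z| ≤ γ * |y - z| := by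
    intro y _ z _
    rw [hf1']
    have he : γ * (1 - y) - γ * (1 - z) = γ * (z - y) := by ring
    rw [he, abs_mul, abs_of_pos hγ0, abs_sub_comm]
  have hL : ∀ a, 0 < (![max β₀ β₂, γ, max β₀ β₂] : Fin 3 → ℝ) a := by
    intro a
    fin_cases a
    · exact lt_trans zero_lt_one hβ1
    · exact hγ0
    · exact lt_trans zero_lt_one hβ1
  have hlip : ∀ a, ∀ y ∈ Icc (0:ℝ) 1, ∀ z ∈ Icc (0:ℝ) 1,
      |(![f₀, f₁, f₂] : Fin 3 → ℝ → ℝ) a y - (![f₀, f₁, f₂] : Fin 3 → ℝ → ℝ) a z| ≤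
        (![max β₀ β₂, γ, max β₀ β₂] : Fin 3 → ℝ) a * |y - z| := by
    intro a
    fin_cases a
    · exact hlip0
    · exact hlip1
    · exact hlip2
  have hp : ∀ a : Fin 3, 0 ≤ (![p₀, p₁, p₂] : Fin 3 → ℝ) a := by
    intro a
    fin_cases a
    · exact hp0
    · exact hp1
    · exact hp2
  obtain ⟨t, ht, hρ'⟩ := Stmt15.exists_t hγ0 (lt_trans zero_lt_one hβ1) hsum hneg
  have hρ : (∑ a : Fin 3, ((![max β₀ β₂, γ, max β₀ β₂] : Fin 3 → ℝ) a) ^ t *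
      (![p₀, p₁, p₂] : Fin 3 → ℝ) a) < 1 := by
    rw [Fin.sum_univ_three]
    simpa using hρ'
  exact Stmt15.main_abstract hm hc hinj hL hlip hp hν ht hρ


end
end
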